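/- arXiv:0810.0999 — 11 statements merged into one kernel-verified Lean document; each statement's English description precedes it below -/
import Mathlib

section
/- Let m, n be positive integers, K, G, E, J real constants with J ≠ 0, and let I ⊆ ℝ be a nonempty open interval. Suppose r, φ : I → ℝ are such that r is twice continuously differentiable, φ is differentiable, and for every t ∈ I: r(t) > 0, 1 + K·r(t)² > 0, φ'(t) = J/r(t)², and the energy relation m²·r'(t)²/(2n²(1 + K·r(t)²)) + J²/(2r(t)²) + √(r(t)⁻² + K) + G = E holds. Assume moreover that the set {t ∈ I : r'(t) = 0} has empty interior in I. Then there exists a real constant φ₀ such that for all t ∈ I: √(1 + 2J²(E − G) + K·J⁴) · cos(n·φ(t)/m − φ₀) = 1 + J²·√(r(t)⁻² + K). (In particular 1 + 2J²(E − G) + K·J⁴ ≥ 0.) -/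
open Real

private lemma auxFd (M N R U D J : ℝ) (hM : M ≠ 0) (hN : N ≠ 0) (hR : R ≠ 0) (hU : U ≠ 0) :
    -(M * J / N) * D / (R * U) * (N * J / (M * R ^ 2))
      = J ^ 2 * (-((2 : ℕ) * R ^ 1 * D) / (R ^ 2) ^ 2 / (2 * U)) := by
  push_cast
  field_simp

private lemma auxCons (M N R U D J K E G : ℝ) (hN : N ≠ 0) (hR : R ≠ 0) (hU : U ≠ 0)
    (hu2 : U ^ 2 = (R ^ 2)⁻¹ + K)
    (key : M ^ 2 * D ^ 2 / (2 * N ^ 2 * (R ^ 2 * U ^ 2)) + J ^ 2 / (2 * R ^ 2) + U + G = E) :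
    (-(M * J / N) * D / (R * U)) ^ 2 + (1 + J ^ 2 * U) ^ 2
      = 1 + 2 * J ^ 2 * (E - G) + K * J ^ 4 := by
  field_simp at hu2 key ⊢
  have h2R : (2 : ℝ) * R ^ 2 ≠ 0 := by positivity
  have key2 : M ^ 2 * D ^ 2 + J ^ 2 * (N ^ 2 * U ^ 2) + U * (2 * N ^ 2 * (R ^ 2 * U ^ 2))
      + G * (2 * N ^ 2 * (R ^ 2 * U ^ 2)) = E * (2 * N ^ 2 * (R ^ 2 * U ^ 2)) := by
    apply mul_right_cancel₀ h2R
    linear_combination (2 * R ^ 2) * key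
  linear_combination J ^ 2 * key2 + J ^ 4 * N ^ 2 * U ^ 2 * hu2

set_option maxHeartbeats 1000000 in
/-- Integration of equatorial trajectories of the type I Bertrand Hamiltonian
(Proposition 3.1, type I, stated for trajectories in time). -/
theorem typeI_trajectory_orbit_equation
    (m n : ℕ) (hm : 0 < m) (hn : 0 < n)
    (K G E J : ℝ) (hJ : J ≠ 0)
    (I : Set ℝ) (hIopen : IsOpen I) (hIconn : I.OrdConnected) (hIne : I.Nonempty)
    (r φ : ℝ → ℝ)
    (hr : ContDiffOn ℝ 2 r I) (hφ : DifferentiableOn ℝ φ I)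
    (hrpos : ∀ t ∈ I, 0 < r t)
    (hmet : ∀ t ∈ I, 0 < 1 + K * r t ^ 2)
    (hang : ∀ t ∈ I, deriv φ t = J / r t ^ 2)
    (henergy : ∀ t ∈ I,
      (m : ℝ) ^ 2 * (deriv r t) ^ 2 / (2 * (n : ℝ) ^ 2 * (1 + K * r t ^ 2))
        + J ^ 2 / (2 * r t ^ 2) + Real.sqrt ((r t ^ 2)⁻¹ + K) + G = E)
    (hcrit : interior {t | t ∈ I ∧ deriv r t = 0} = ∅) :
    ∃ φ₀ : ℝ, ∀ t ∈ I,
      Real.sqrt (1 + 2 * J ^ 2 * (E - G) + K * J ^ 4)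
          * Real.cos ((n : ℝ) * φ t / (m : ℝ) - φ₀)
        = 1 + J ^ 2 * Real.sqrt ((r t ^ 2)⁻¹ + K) := by
  have hm' : (m : ℝ) ≠ 0 := Nat.cast_ne_zero.2 hm.ne'
  have hn' : (n : ℝ) ≠ 0 := Nat.cast_ne_zero.2 hn.ne'
  set A2 : ℝ := 1 + 2 * J ^ 2 * (E - G) + K * J ^ 4 with hA2_def
  set u : ℝ → ℝ := fun t => Real.sqrt ((r t ^ 2)⁻¹ + K) with hu_def
  set F : ℝ → ℝ := fun t => 1 + J ^ 2 * u t with hF_def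
  set θ : ℝ → ℝ := fun t => (n : ℝ) * φ t / (m : ℝ) with hθ_def
  set w : ℝ → ℝ := fun t => -((m : ℝ) * J / (n : ℝ)) * deriv r t / (r t * u t) with hw_def
  set θd : ℝ → ℝ := fun t => (n : ℝ) * J / ((m : ℝ) * r t ^ 2) with hθd_def
  clear_value A2 u F θ w θd
  have hr0 : ∀ t ∈ I, r t ≠ 0 := fun t ht => (hrpos t ht).ne'
  have hP : ∀ t ∈ I, 0 < (r t ^ 2)⁻¹ + K := by
    intro t ht
    have h2 : (0:ℝ) < r t ^ 2 := pow_pos (hrpos t ht) 2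
    have h1 : (r t ^ 2)⁻¹ + K = (1 + K * r t ^ 2) / r t ^ 2 := by
      field_simp [hr0 t ht]
    rw [h1]
    exact div_pos (hmet t ht) h2
  have hu_pos : ∀ t ∈ I, 0 < u t := by
    intro t ht
    rw [hu_def]
    exact Real.sqrt_pos.2 (hP t ht)
  have hu0 : ∀ t ∈ I, u t ≠ 0 := fun t ht => (hu_pos t ht).ne'
  have hu_sq : ∀ t ∈ I, u t ^ 2 = (r t ^ 2)⁻¹ + K := by
    intro t ht
    rw [hu_def]
    exact Real.sq_sqrt (hP t ht).le
  -- differentiability of r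
  have hrd : ∀ t ∈ I, HasDerivAt r (deriv r t) t := fun t ht =>
    ((hr.differentiableOn (by norm_num) t ht).differentiableAt
      (hIopen.mem_nhds ht)).hasDerivAt
  have hrc1 : ContDiffOn ℝ 1 r I := hr.of_le (by norm_num)
  have hdrc : ContDiffOn ℝ 1 (deriv r) I := hr.deriv_of_isOpen hIopen (by norm_num)
  have huc : ContDiffOn ℝ 1 u I := by
    rw [hu_def]
    exact (((hrc1.pow 2).inv (fun t ht => pow_ne_zero 2 (hr0 t ht))).add
      contDiffOn_const).sqrt (fun t ht => (hP t ht).ne')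
  have hFc : ContDiffOn ℝ 1 F I := by
    rw [hF_def]; exact contDiffOn_const.add (contDiffOn_const.mul huc)
  have hwc : ContDiffOn ℝ 1 w I := by
    rw [hw_def]
    exact (contDiffOn_const.mul hdrc).div (hrc1.mul huc)
      (fun t ht => mul_ne_zero (hr0 t ht) (hu0 t ht))
  have hwd : ∀ t ∈ I, HasDerivAt w (deriv w t) t := fun t ht =>
    ((hwc.differentiableOn one_ne_zero t ht).differentiableAt (hIopen.mem_nhds ht)).hasDerivAt
  -- derivative of F
  have hFd : ∀ t ∈ I, HasDerivAt F (w t * θd t) t := by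
    intro t ht
    have h1 : HasDerivAt (fun s => (r s ^ 2)⁻¹ + K)
        (-((2 : ℕ) * r t ^ 1 * deriv r t) / (r t ^ 2) ^ 2) t :=
      (((hrd t ht).pow 2).inv (pow_ne_zero 2 (hr0 t ht))).add_const K
    have h2 := h1.sqrt (hP t ht).ne'
    have h3 := (h2.const_mul (J ^ 2)).const_add 1
    rw [hF_def, hu_def, hw_def, hθd_def]
    refine h3.congr_deriv (Eq.symm ?_)
    have hut : Real.sqrt ((r t ^ 2)⁻¹ + K) = u t := (congrFun hu_def t).symm
    rw [hut]
    exact auxFd (m : ℝ) (n : ℝ) (r t) (u t) (deriv r t) J hm' hn' (hr0 t ht) (hu0 t ht)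
  -- derivative of θ
  have hθder : ∀ t ∈ I, HasDerivAt θ (θd t) t := by
    intro t ht
    have h1 : HasDerivAt φ (J / r t ^ 2) t := by
      have h := ((hφ t ht).differentiableAt (hIopen.mem_nhds ht)).hasDerivAt
      rwa [hang t ht] at h
    have h2 := (h1.const_mul ((n : ℝ))).div_const ((m : ℝ))
    rw [hθ_def, hθd_def]
    refine h2.congr_deriv (Eq.symm ?_)
    field_simp
  -- conservation law
  have hcons : ∀ t ∈ I, w t ^ 2 + F t ^ 2 = A2 := by
    intro t ht
    have key := henergy t ht
    have hu2 := hu_sq t ht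
    have hut : Real.sqrt ((r t ^ 2)⁻¹ + K) = u t := (congrFun hu_def t).symm
    rw [hut] at key
    have hru : 1 + K * r t ^ 2 = r t ^ 2 * u t ^ 2 := by
      rw [hu2, mul_add, mul_inv_cancel₀ (pow_ne_zero 2 (hr0 t ht))]; ring
    rw [hru] at key
    rw [hA2_def, hw_def, hF_def]
    exact auxCons (m : ℝ) (n : ℝ) (r t) (u t) (deriv r t) J K E G hn' (hr0 t ht)
      (hu0 t ht) hu2 key
  -- derivative of conservation law
  have hWd : ∀ t ∈ I, w t * (deriv w t + F t * θd t) = 0 := by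
    intro t ht
    have h1 : HasDerivAt (fun s => w s ^ 2 + F s ^ 2)
        ((2 : ℕ) * w t ^ 1 * deriv w t + (2 : ℕ) * F t ^ 1 * (w t * θd t)) t :=
      ((hwd t ht).pow 2).add ((hFd t ht).pow 2)
    have heq : (fun s => w s ^ 2 + F s ^ 2) =ᶠ[nhds t] (fun _ => A2) := by
      filter_upwards [hIopen.mem_nhds ht] with s hs using hcons s hs
    have h2 : HasDerivAt (fun s => w s ^ 2 + F s ^ 2) 0 t :=
      (hasDerivAt_const t A2).congr_of_eventuallyEq heq
    have h3 := h1.unique h2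
    push_cast at h3
    linear_combination h3 / 2
  -- q vanishes on I
  have hq0 : ∀ t ∈ I, deriv w t + F t * θd t = 0 := by
    have hθdc : ContinuousOn θd I := by
      rw [hθd_def]
      exact continuousOn_const.div (continuousOn_const.mul (hrc1.continuousOn.pow 2))
        (fun t ht => mul_ne_zero hm' (pow_ne_zero 2 (hr0 t ht)))
    have hqc : ContinuousOn (fun s => deriv w s + F s * θd s) I :=
      (hwc.continuousOn_deriv_of_isOpen hIopen le_rfl).add (hFc.continuousOn.mul hθdc)
    have hSopen : IsOpen (I ∩ (fun s => deriv w s + F s * θd s) ⁻¹' ({0}ᶜ)) :=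
      hqc.isOpen_inter_preimage hIopen isOpen_compl_singleton
    have hSsub : (I ∩ (fun s => deriv w s + F s * θd s) ⁻¹' ({0}ᶜ))
        ⊆ {t | t ∈ I ∧ deriv r t = 0} := by
      rintro s ⟨hsI, hsq⟩
      have hq : deriv w s + F s * θd s ≠ 0 := hsq
      have hw0 : w s = 0 := by
        rcases mul_eq_zero.1 (hWd s hsI) with h | h
        · exact h
        · exact absurd h hq
      refine ⟨hsI, ?_⟩
      rw [hw_def] at hw0
      simp only [neg_mul, neg_div, neg_eq_zero, div_eq_zero_iff] at hw0
      rcases hw0 with h | h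
      · rcases mul_eq_zero.1 h with h' | h'
        · exact absurd h' (div_ne_zero (mul_ne_zero hm' hJ) hn')
        · exact h'
      · exact absurd h (mul_ne_zero (hr0 s hsI) (hu0 s hsI))
    have hSempty : I ∩ (fun s => deriv w s + F s * θd s) ⁻¹' ({0}ᶜ) = ∅ := by
      have h := interior_maximal hSsub hSopen
      rw [hcrit] at h
      exact Set.subset_empty_iff.1 h
    intro t ht
    by_contra hne
    have hmem : t ∈ I ∩ (fun s => deriv w s + F s * θd s) ⁻¹' ({0}ᶜ) := ⟨ht, hne⟩
    rw [hSempty] at hmem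
    exact hmem
  -- the two constants of motion
  set g : ℝ → ℝ := fun s => F s * Real.cos (θ s) - w s * Real.sin (θ s) with hg_def
  set h : ℝ → ℝ := fun s => F s * Real.sin (θ s) + w s * Real.cos (θ s) with hh_def
  clear_value g h
  have hgd : ∀ t ∈ I, HasDerivAt g 0 t := by
    intro t ht
    have h1 := ((hFd t ht).mul ((hθder t ht).cos)).sub ((hwd t ht).mul ((hθder t ht).sin))
    rw [hg_def]
    refine h1.congr_deriv (Eq.symm ?_)
    linear_combination (Real.sin (θ t)) * (hq0 t ht)
  have hhd : ∀ t ∈ I, HasDerivAt h 0 t := by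
    intro t ht
    have h1 := ((hFd t ht).mul ((hθder t ht).sin)).add ((hwd t ht).mul ((hθder t ht).cos))
    rw [hh_def]
    refine h1.congr_deriv (Eq.symm ?_)
    linear_combination (-Real.cos (θ t)) * (hq0 t ht)
  -- constancy
  have hconv : Convex ℝ I := hIconn.convex
  have hconst : ∀ f : ℝ → ℝ, (∀ t ∈ I, HasDerivAt f 0 t) → ∀ x ∈ I, ∀ y ∈ I, f x = f y := by
    intro f hf x hx y hy
    refine hconv.is_const_of_fderivWithin_eq_zero
      (fun z hz => ((hf z hz).differentiableAt).differentiableWithinAt) ?_ hx hy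
    intro z hz
    rw [fderivWithin_of_isOpen hIopen hz, (hf z hz).hasFDerivAt.fderiv]
    ext
    simp
  obtain ⟨t₀, ht₀⟩ := hIne
  have hgc : ∀ t ∈ I, g t = g t₀ := fun t ht => hconst g hgd t ht t₀ ht₀
  have hhc : ∀ t ∈ I, h t = h t₀ := fun t ht => hconst h hhd t ht t₀ ht₀
  have hA2v : g t₀ ^ 2 + h t₀ ^ 2 = A2 := by
    rw [hg_def, hh_def]
    simp only
    have hc := hcons t₀ ht₀
    have hsc := Real.sin_sq_add_cos_sq (θ t₀)
    linear_combination hc + (F t₀ ^ 2 + w t₀ ^ 2) * hsc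
  -- F as combination
  have hFcomb : ∀ t ∈ I, F t = g t₀ * Real.cos (θ t) + h t₀ * Real.sin (θ t) := by
    intro t ht
    rw [← hgc t ht, ← hhc t ht, hg_def, hh_def]
    simp only
    have hsct := Real.sin_sq_add_cos_sq (θ t)
    linear_combination (F t) * hsct.symm
  have hgoalF : ∀ t, 1 + J ^ 2 * Real.sqrt ((r t ^ 2)⁻¹ + K) = F t := by
    intro t
    rw [hF_def, hu_def]
  have hgoalθ : ∀ t, (n : ℝ) * φ t / (m : ℝ) = θ t := by
    intro t
    rw [hθ_def]
  -- choose the phase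
  by_cases hz : g t₀ = 0 ∧ h t₀ = 0
  · refine ⟨0, fun t ht => ?_⟩
    have hA20 : A2 = 0 := by rw [← hA2v, hz.1, hz.2]; ring
    have hFt : F t = 0 := by rw [hFcomb t ht, hz.1, hz.2]; ring
    rw [hgoalF t, hFt, hA20, Real.sqrt_zero, zero_mul]
  · set z : ℂ := (g t₀ : ℂ) + (h t₀ : ℂ) * Complex.I with hz_def
    have hzne : z ≠ 0 := by
      intro hz0
      apply hz
      constructor
      · have h1 := congrArg Complex.re hz0
        simpa [hz_def] using h1
      · have h1 := congrArg Complex.im hz0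
        simpa [hz_def] using h1
    have habs : ‖z‖ = Real.sqrt A2 := by
      rw [← hA2v, hz_def, Complex.norm_def, Complex.normSq_add_mul_I]
    have habsne : ‖z‖ ≠ 0 := norm_ne_zero_iff.2 hzne
    have hcos : Real.cos (Complex.arg z) = g t₀ / ‖z‖ := by
      rw [Complex.cos_arg hzne, hz_def]
      simp
    have hsin : Real.sin (Complex.arg z) = h t₀ / ‖z‖ := by
      rw [Complex.sin_arg, hz_def]
      simp
    refine ⟨Complex.arg z, fun t ht => ?_⟩
    rw [hgoalθ t, hgoalF t, hFcomb t ht, Real.cos_sub, ← habs, hcos, hsin]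
    field_simp
end

section
/- Let m, n be positive integers, D, K, G, E, J real constants with J ≠ 0, σ ∈ {1, −1}, and let I ⊆ ℝ be a nonempty open interval. Suppose r, φ : I → ℝ are such that r is twice continuously differentiable, φ is differentiable, and for every t ∈ I: r(t) > 0, (1 − D·r(t)²)² − K·r(t)⁴ > 0, 1 − D·r(t)² + σ·S(t) > 0 where S(t) := √((1 − D·r(t)²)² − K·r(t)⁴), φ'(t) = J/r(t)², and the energy relation m²(1 − D·r(t)² + σ·S(t))·r'(t)²/(n²·S(t)²) + J²/(2r(t)²) + G − σ·r(t)²/(1 − D·r(t)² + σ·S(t)) = E holds. Assume moreover that the set {t ∈ I : r'(t) = 0} has empty interior in I. Then there exists a real constant φ₀ such that for all t ∈ I: √((2E − 2G − D·J²)² + 4σ·J² − K·J⁴) · cos(n·φ(t)/m − φ₀) = J²·r(t)⁻²·(1 − D·r(t)² + σ·S(t)) + D·J² + 2G − 2E. (In particular (2E − 2G − DJ²)² + 4σJ² − KJ⁴ ≥ 0.) -/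
open Real

private lemma smulRight_one_zero : (1 : ℝ →L[ℝ] ℝ).smulRight (0 : ℝ) = 0 := by
  ext
  simp

set_option maxHeartbeats 1000000

/-- Integration of equatorial trajectories of the type II Bertrand Hamiltonian
(Proposition 3.1, type II, stated for trajectories in time). -/
theorem typeII_trajectory_orbit_equation
    (m n : ℕ) (hm : 0 < m) (hn : 0 < n)
    (D K G E J σ : ℝ) (hJ : J ≠ 0) (hσ : σ = 1 ∨ σ = -1)
    (I : Set ℝ) (hIopen : IsOpen I) (hIconn : I.OrdConnected) (hIne : I.Nonempty)
    (r φ : ℝ → ℝ)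
    (hr : ContDiffOn ℝ 2 r I) (hφ : DifferentiableOn ℝ φ I)
    (hrpos : ∀ t ∈ I, 0 < r t)
    (hmet : ∀ t ∈ I, 0 < (1 - D * r t ^ 2) ^ 2 - K * r t ^ 4)
    (hmet' : ∀ t ∈ I,
      0 < 1 - D * r t ^ 2 + σ * Real.sqrt ((1 - D * r t ^ 2) ^ 2 - K * r t ^ 4))
    (hang : ∀ t ∈ I, deriv φ t = J / r t ^ 2)
    (henergy : ∀ t ∈ I,
      (m : ℝ) ^ 2
            * (1 - D * r t ^ 2 + σ * Real.sqrt ((1 - D * r t ^ 2) ^ 2 - K * r t ^ 4))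
            * (deriv r t) ^ 2
            / ((n : ℝ) ^ 2 * (Real.sqrt ((1 - D * r t ^ 2) ^ 2 - K * r t ^ 4)) ^ 2)
        + J ^ 2 / (2 * r t ^ 2) + G
        - σ * r t ^ 2
            / (1 - D * r t ^ 2 + σ * Real.sqrt ((1 - D * r t ^ 2) ^ 2 - K * r t ^ 4))
        = E)
    (hcrit : interior {t | t ∈ I ∧ deriv r t = 0} = ∅) :
    ∃ φ₀ : ℝ, ∀ t ∈ I,
      Real.sqrt ((2 * E - 2 * G - D * J ^ 2) ^ 2 + 4 * σ * J ^ 2 - K * J ^ 4)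
          * Real.cos ((n : ℝ) * φ t / (m : ℝ) - φ₀)
        = J ^ 2 * (r t ^ 2)⁻¹
              * (1 - D * r t ^ 2 + σ * Real.sqrt ((1 - D * r t ^ 2) ^ 2 - K * r t ^ 4))
            + D * J ^ 2 + 2 * G - 2 * E := by
  obtain ⟨t₀, ht₀⟩ := hIne
  have hσ2 : σ ^ 2 = 1 := by rcases hσ with h | h <;> simp [h]
  have hσ0 : σ ≠ 0 := by rcases hσ with h | h <;> norm_num [h]
  have hm0 : (m : ℝ) ≠ 0 := Nat.cast_ne_zero.mpr hm.ne'
  have hn0 : (n : ℝ) ≠ 0 := Nat.cast_ne_zero.mpr hn.ne'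
  set S : ℝ → ℝ := fun t => Real.sqrt ((1 - D * r t ^ 2) ^ 2 - K * r t ^ 4) with hSdef
  set P : ℝ → ℝ := fun t => 1 - D * r t ^ 2 + σ * S t with hPdef
  set W : ℝ → ℝ := fun t => J ^ 2 * (r t ^ 2)⁻¹ * P t + (D * J ^ 2 + 2 * G - 2 * E)
    with hWdef
  set Asq : ℝ := (2 * E - 2 * G - D * J ^ 2) ^ 2 + 4 * σ * J ^ 2 - K * J ^ 4 with hAsqdef
  set ψ : ℝ → ℝ := fun t => (n : ℝ) * φ t / (m : ℝ) with hψdef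
  set ψ' : ℝ → ℝ := fun t => (n : ℝ) * J / ((m : ℝ) * r t ^ 2) with hψ'def
  set S' : ℝ → ℝ := fun t =>
    (-(4 * D * (1 - D * r t ^ 2) * r t) - 4 * K * r t ^ 3) * deriv r t / (2 * S t) with hS'def
  set P' : ℝ → ℝ := fun t => -(2 * D * r t * deriv r t) + σ * S' t with hP'def
  set W' : ℝ → ℝ := fun t => -2 * σ * J ^ 2 * P t * deriv r t / (r t ^ 3 * S t) with hW'def
  set q : ℝ → ℝ := fun t => -2 * σ * (m : ℝ) * J * P t * deriv r t / ((n : ℝ) * r t * S t)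
    with hqdef
  set q' : ℝ → ℝ := fun t =>
    (-2 * σ * (m : ℝ) * J * (P' t * deriv r t + P t * deriv (deriv r) t)
        * ((n : ℝ) * r t * S t)
      - -2 * σ * (m : ℝ) * J * P t * deriv r t
        * ((n : ℝ) * (deriv r t * S t + r t * S' t)))
      / ((n : ℝ) * r t * S t) ^ 2 with hq'def
  -- basic positivity
  have hS0 : ∀ t ∈ I, 0 < S t := fun t ht => Real.sqrt_pos.mpr (hmet t ht)
  have hSsq : ∀ t ∈ I, S t ^ 2 = (1 - D * r t ^ 2) ^ 2 - K * r t ^ 4 :=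
    fun t ht => Real.sq_sqrt (hmet t ht).le
  have hP0 : ∀ t ∈ I, 0 < P t := hmet'
  have hr0 : ∀ t ∈ I, r t ≠ 0 := fun t ht => (hrpos t ht).ne'
  -- differentiability of r, deriv r
  have hrd : ∀ t ∈ I, HasDerivAt r (deriv r t) t := by
    intro t ht
    exact ((hr.differentiableOn (by norm_num)).differentiableAt
      (hIopen.mem_nhds ht)).hasDerivAt
  have hr1 : ContDiffOn ℝ 1 (deriv r) I := hr.deriv_of_isOpen hIopen (by norm_num)
  have hrdd : ∀ t ∈ I, HasDerivAt (deriv r) (deriv (deriv r) t) t := by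
    intro t ht
    exact ((hr1.differentiableOn (by norm_num)).differentiableAt (hIopen.mem_nhds ht)).hasDerivAt
  have hrc : ContinuousOn r I := hr.continuousOn
  have hrdc : ContinuousOn (deriv r) I := hr1.continuousOn
  have hrddc : ContinuousOn (deriv (deriv r)) I :=
    hr1.continuousOn_deriv_of_isOpen hIopen le_rfl
  -- derivative of S
  have hSd : ∀ t ∈ I, HasDerivAt S (S' t) t := by
    intro t ht
    have hx := hrd t ht
    have hinner : HasDerivAt (fun t => (1 - D * r t ^ 2) ^ 2 - K * r t ^ 4)
        ((-(4 * D * (1 - D * r t ^ 2) * r t) - 4 * K * r t ^ 3) * deriv r t) t := by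
      have h1 : HasDerivAt (fun t => 1 - D * r t ^ 2)
          (-(D * (2 * r t * deriv r t))) t := (((hx.pow 2).const_mul D).const_sub 1).congr_deriv
          (by ring)
      have := ((h1.pow 2).sub ((hx.pow 4).const_mul K))
      refine this.congr_deriv ?_
      ring
    have := hinner.sqrt (ne_of_gt (hmet t ht))
    convert this using 1
  -- derivative of P
  have hPd : ∀ t ∈ I, HasDerivAt P (P' t) t := by
    intro t ht
    have hx := hrd t ht
    have h1 : HasDerivAt (fun t => 1 - D * r t ^ 2) (-(D * (2 * r t * deriv r t))) t :=
      (((hx.pow 2).const_mul D).const_sub 1).congr_deriv (by ring)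
    have := h1.add ((hSd t ht).const_mul σ)
    refine this.congr_deriv ?_
    ring
  -- derivative of W
  have hWd : ∀ t ∈ I, HasDerivAt W (W' t) t := by
    intro t ht
    have hx := hrd t ht
    have hx2 : r t ^ 2 ≠ 0 := pow_ne_zero 2 (hr0 t ht)
    have h1 : HasDerivAt (fun t => J ^ 2 * (r t ^ 2)⁻¹)
        (J ^ 2 * (-(2 * r t * deriv r t) / (r t ^ 2) ^ 2)) t := by
      have := ((hx.pow 2).inv hx2).const_mul (J ^ 2)
      refine this.congr_deriv ?_
      simp only [Pi.pow_apply]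
      ring
    have := (h1.mul (hPd t ht)).add_const (D * J ^ 2 + 2 * G - 2 * E)
    refine this.congr_deriv ?_
    have hS2 := hSsq t ht
    have hSne : S t ≠ 0 := (hS0 t ht).ne'
    have hrne := hr0 t ht
    simp only [hW'def, hP'def, hS'def, hPdef]
    field_simp
    linear_combination (4*(deriv r t)*(S t)) * hσ2
      + (-4*σ*(deriv r t)) * hS2
  -- derivative of ψ
  have hψd : ∀ t ∈ I, HasDerivAt ψ (ψ' t) t := by
    intro t ht
    have hφd : HasDerivAt φ (J / r t ^ 2) t := by
      have := (hφ.differentiableAt (hIopen.mem_nhds ht)).hasDerivAt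
      rwa [hang t ht] at this
    have := (hφd.const_mul (n : ℝ)).div_const (m : ℝ)
    refine this.congr_deriv ?_
    simp only [hψ'def]
    ring
  -- derivative of q
  have hqd : ∀ t ∈ I, HasDerivAt q (q' t) t := by
    intro t ht
    have hden : ((n : ℝ) * r t * S t) ≠ 0 := by
      have := hS0 t ht
      have := hrpos t ht
      positivity
    have hnum : HasDerivAt (fun t => -2 * σ * (m : ℝ) * J * P t * deriv r t)
        (-2 * σ * (m : ℝ) * J * (P' t * deriv r t + P t * deriv (deriv r) t)) t := by
      have := (((hPd t ht).const_mul (-2 * σ * (m : ℝ) * J)).mul (hrdd t ht))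
      refine this.congr_deriv ?_
      ring
    have hdend : HasDerivAt (fun t => (n : ℝ) * r t * S t)
        ((n : ℝ) * (deriv r t * S t + r t * S' t)) t := by
      have := (((hrd t ht).const_mul (n : ℝ)).mul (hSd t ht))
      refine this.congr_deriv ?_
      ring
    have := hnum.div hdend hden
    exact this
  -- key first-order identity
  have hkey : ∀ t ∈ I, W t ^ 2 + q t ^ 2 = Asq := by
    intro t ht
    have hE := henergy t ht
    have hS2 := hSsq t ht
    have hSne : S t ≠ 0 := (hS0 t ht).ne'
    have hPne : P t ≠ 0 := (hP0 t ht).ne'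
    have hrne := hr0 t ht
    have hPne2 : 1 - D * r t ^ 2 + σ * S t ≠ 0 := (hP0 t ht).ne'
    change _ * (1 - D * r t ^ 2 + σ * S t) * _ / (_ * S t ^ 2) + _ + G
      - σ * r t ^ 2 / (1 - D * r t ^ 2 + σ * S t) = E at hE
    simp only [hWdef, hqdef, hAsqdef, hPdef]
    field_simp at hE ⊢
    linear_combination (2*J^2*σ^2) * hE
      + ((S t)^2*(n:ℝ)^2*(-2*J^2*((1 - D*(r t)^2 + σ*S t)*J^2
          + (r t)^2*(1 - D*(r t)^2 + σ*S t)*(D*J^2 + 2*G - 2*E - D*J^2) - 2*(r t)^4*σ)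
          + J^4*(S t)^2)) * hσ2
      + ((S t)^2*(n:ℝ)^2*J^4) * hS2
  -- W' = ψ' * q
  have hWq : ∀ t ∈ I, W' t = ψ' t * q t := by
    intro t ht
    have hSne : S t ≠ 0 := (hS0 t ht).ne'
    have hrne := hr0 t ht
    simp only [hW'def, hψ'def, hqdef]
    field_simp
  -- derivative of W^2 + q^2 is zero
  have hWqzero : ∀ t ∈ I, W t * W' t + q t * q' t = 0 := by
    intro t ht
    have h1 : HasDerivAt (fun t => W t ^ 2 + q t ^ 2)
        (2 * W t * W' t + 2 * q t * q' t) t := by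
      have := ((hWd t ht).pow 2).add ((hqd t ht).pow 2)
      refine this.congr_deriv ?_
      ring
    have h2 : HasDerivAt (fun t => W t ^ 2 + q t ^ 2) 0 t := by
      have : (fun t => W t ^ 2 + q t ^ 2) =ᶠ[nhds t] fun _ => Asq :=
        Filter.eventually_of_mem (hIopen.mem_nhds ht) (fun s hs => hkey s hs)
      exact (hasDerivAt_const t Asq).congr_of_eventuallyEq this
    have := h1.unique h2
    linarith
  -- density of noncritical points
  have hdense : ∀ t ∈ I, t ∈ closure {s | s ∈ I ∧ deriv r s ≠ 0} := by
    intro t ht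
    rw [_root_.mem_closure_iff]
    intro o ho hto
    by_contra hne
    rw [Set.not_nonempty_iff_eq_empty] at hne
    have hsub : o ∩ I ⊆ {s | s ∈ I ∧ deriv r s = 0} := by
      intro s hs
      refine ⟨hs.2, by_contra fun h => ?_⟩
      exact Set.eq_empty_iff_forall_notMem.mp hne s ⟨hs.1, hs.2, h⟩
    have : o ∩ I ⊆ interior {s | s ∈ I ∧ deriv r s = 0} :=
      (ho.inter hIopen).subset_interior_iff.mpr hsub
    rw [hcrit] at this
    exact this ⟨hto, ht⟩
  -- q' = -ψ' * W on the dense set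
  have hode' : ∀ t ∈ I, deriv r t ≠ 0 → q' t = -(ψ' t * W t) := by
    intro t ht hrt
    have hq0 : q t ≠ 0 := by
      have hSne : S t ≠ 0 := (hS0 t ht).ne'
      have hPne : P t ≠ 0 := (hP0 t ht).ne'
      have hrne := hr0 t ht
      simp only [hqdef]
      apply div_ne_zero
      · exact mul_ne_zero (mul_ne_zero (mul_ne_zero (mul_ne_zero
          (mul_ne_zero (by norm_num : (-2:ℝ) ≠ 0) hσ0) hm0) hJ) hPne) hrt
      · exact mul_ne_zero (mul_ne_zero hn0 hrne) hSne
    have h1 := hWqzero t ht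
    rw [hWq t ht] at h1
    have h2 : q t * (q' t + ψ' t * W t) = 0 := by linear_combination h1
    rcases mul_eq_zero.mp h2 with h | h
    · exact absurd h hq0
    · linarith
  -- q' = -ψ' * W everywhere by continuity
  have hScont : ContinuousOn S I := by
    apply ContinuousOn.sqrt
    fun_prop
  have hS'cont : ContinuousOn S' I := by
    simp only [hS'def]
    apply ContinuousOn.div
    · fun_prop
    · fun_prop
    · intro t ht
      have := hS0 t ht
      positivity
  have hP'cont : ContinuousOn P' I := by
    simp only [hP'def]
    fun_prop
  have hPcont : ContinuousOn P I := by
    simp only [hPdef]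
    fun_prop
  have hWcont : ContinuousOn W I := by
    simp only [hWdef]
    apply ContinuousOn.add _ continuousOn_const
    apply ContinuousOn.mul _ hPcont
    apply ContinuousOn.mul continuousOn_const
    apply ContinuousOn.inv₀ (by fun_prop)
    intro t ht
    have := hrpos t ht
    positivity
  have hfcont : ContinuousOn (fun s => q' s + ψ' s * W s) I := by
    apply ContinuousOn.add
    · simp only [hq'def]
      apply ContinuousOn.div
      · fun_prop
      · fun_prop
      · intro t ht
        have h1 := hS0 t ht
        have h2 := hrpos t ht
        have h3 := hn0
        positivity
    · apply ContinuousOn.mul _ hWcont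
      simp only [hψ'def]
      apply ContinuousOn.div continuousOn_const (by fun_prop)
      intro t ht
      have := hrpos t ht
      positivity
  have hode : ∀ t ∈ I, q' t = -(ψ' t * W t) := by
    intro t ht
    have hmem : (fun s => q' s + ψ' s * W s) t ∈ closure
        ((fun s => q' s + ψ' s * W s) '' {s | s ∈ I ∧ deriv r s ≠ 0}) := by
      apply ContinuousWithinAt.mem_closure_image
      · exact ((hfcont t ht).mono (fun s hs => hs.1))
      · exact hdense t ht
    have himg : (fun s => q' s + ψ' s * W s) '' {s | s ∈ I ∧ deriv r s ≠ 0} ⊆ {0} := by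
      rintro - ⟨s, ⟨hsI, hsr⟩, rfl⟩
      simp [hode' s hsI hsr]
    have : (fun s => q' s + ψ' s * W s) t ∈ closure ({0} : Set ℝ) :=
      closure_mono himg hmem
    rw [closure_singleton] at this
    simp only [Set.mem_singleton_iff] at this
    linarith
  -- g and h are constant
  set g : ℝ → ℝ := fun t => W t * Real.cos (ψ t) - q t * Real.sin (ψ t) with hgdef
  set h : ℝ → ℝ := fun t => W t * Real.sin (ψ t) + q t * Real.cos (ψ t) with hhdef
  have hgd : ∀ t ∈ I, HasDerivAt g 0 t := by
    intro t ht
    have := ((hWd t ht).mul (hψd t ht).cos).sub ((hqd t ht).mul (hψd t ht).sin)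
    refine this.congr_deriv ?_
    rw [hWq t ht, hode t ht]
    ring
  have hhd : ∀ t ∈ I, HasDerivAt h 0 t := by
    intro t ht
    have := ((hWd t ht).mul (hψd t ht).sin).add ((hqd t ht).mul (hψd t ht).cos)
    refine this.congr_deriv ?_
    rw [hWq t ht, hode t ht]
    ring
  have hconv : Convex ℝ I := convex_iff_ordConnected.mpr hIconn
  have hconstg : ∀ t ∈ I, g t = g t₀ := by
    intro t ht
    exact hconv.is_const_of_fderivWithin_eq_zero
      (fun s hs => (hgd s hs).differentiableAt.differentiableWithinAt)
      (fun s hs => by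
        rw [fderivWithin_of_isOpen hIopen hs, (hgd s hs).hasFDerivAt.fderiv]
        exact smulRight_one_zero) ht ht₀
  have hconsth : ∀ t ∈ I, h t = h t₀ := by
    intro t ht
    exact hconv.is_const_of_fderivWithin_eq_zero
      (fun s hs => (hhd s hs).differentiableAt.differentiableWithinAt)
      (fun s hs => by
        rw [fderivWithin_of_isOpen hIopen hs, (hhd s hs).hasFDerivAt.fderiv]
        exact smulRight_one_zero) ht ht₀
  -- choose φ₀ via complex argument
  set z : ℂ := ⟨g t₀, h t₀⟩ with hzdef
  have habs : ‖z‖ = Real.sqrt Asq := by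
    rw [Complex.norm_def, Complex.normSq_mk]
    congr 1
    have h1 := hkey t₀ ht₀
    have h2 : g t₀ ^ 2 + h t₀ ^ 2 = W t₀ ^ 2 + q t₀ ^ 2 := by
      simp only [hgdef, hhdef]
      linear_combination (W t₀ ^ 2 + q t₀ ^ 2) * Real.sin_sq_add_cos_sq (ψ t₀)
    linear_combination h1 + h2
  refine ⟨Complex.arg z, fun t ht => ?_⟩
  have hcos : Real.sqrt Asq * Real.cos (Complex.arg z) = g t₀ := by
    rw [← habs]; exact Complex.norm_mul_cos_arg z
  have hsin : Real.sqrt Asq * Real.sin (Complex.arg z) = h t₀ := by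
    rw [← habs]; exact Complex.norm_mul_sin_arg z
  have hψt : (n : ℝ) * φ t / (m : ℝ) = ψ t := rfl
  rw [hψt, Real.cos_sub]
  have expand : Real.sqrt Asq * (Real.cos (ψ t) * Real.cos (Complex.arg z)
      + Real.sin (ψ t) * Real.sin (Complex.arg z))
      = g t₀ * Real.cos (ψ t) + h t₀ * Real.sin (ψ t) := by
    rw [← hcos, ← hsin]; ring
  rw [expand, ← hconstg t ht, ← hconsth t ht]
  have htrig := Real.sin_sq_add_cos_sq (ψ t)
  have hWt : W t = J ^ 2 * (r t ^ 2)⁻¹ * P t + (D * J ^ 2 + 2 * G - 2 * E) := rfl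
  simp only [hgdef, hhdef]
  linear_combination W t * htrig + hWt
end

section
/- Let m, n be positive integers, K, G, E, J real constants with J ≠ 0, I ⊆ ℝ an open interval, and r : I → ℝ a differentiable function with r(φ) > 0 and 1 + K·r(φ)² > 0 for all φ ∈ I, satisfying the orbit equation (m²J²/(n²·r(φ)⁴·(1 + K·r(φ)²)))·r'(φ)² = 2E − 2(√(r(φ)⁻² + K) + G) − J²/r(φ)² for every φ ∈ I. Then the function u(φ) := √(r(φ)⁻² + K) is differentiable on I and satisfies ((mJ/n)·u'(φ))² = 2(E − G) + K·J² − 2·u(φ) − J²·u(φ)² for every φ ∈ I. -/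
open Real

/-- The change of variables `u = √(r⁻² + K)` transforms the type I orbit equation
into a harmonic-type equation (proof of Proposition 3.1, type I). -/
theorem typeI_change_of_variables
    (m n : ℕ) (hm : 0 < m) (hn : 0 < n)
    (K G E J : ℝ) (hJ : J ≠ 0)
    (I : Set ℝ) (hIopen : IsOpen I) (hIconn : I.OrdConnected)
    (r : ℝ → ℝ) (hr : DifferentiableOn ℝ r I)
    (hrpos : ∀ φ ∈ I, 0 < r φ)
    (hmet : ∀ φ ∈ I, 0 < 1 + K * r φ ^ 2)
    (horbit : ∀ φ ∈ I,
      (m : ℝ) ^ 2 * J ^ 2 / ((n : ℝ) ^ 2 * r φ ^ 4 * (1 + K * r φ ^ 2))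
          * (deriv r φ) ^ 2
        = 2 * E - 2 * (Real.sqrt ((r φ ^ 2)⁻¹ + K) + G) - J ^ 2 / r φ ^ 2) :
    DifferentiableOn ℝ (fun x => Real.sqrt ((r x ^ 2)⁻¹ + K)) I ∧
    ∀ φ ∈ I,
      ((m : ℝ) * J / (n : ℝ) * deriv (fun x => Real.sqrt ((r x ^ 2)⁻¹ + K)) φ) ^ 2
        = 2 * (E - G) + K * J ^ 2 - 2 * Real.sqrt ((r φ ^ 2)⁻¹ + K)
            - J ^ 2 * (Real.sqrt ((r φ ^ 2)⁻¹ + K)) ^ 2 := by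
  -- Key pointwise facts
  have key : ∀ φ ∈ I, HasDerivAt (fun x => Real.sqrt ((r x ^ 2)⁻¹ + K))
      ((-(2 * r φ ^ 1 * deriv r φ) / (r φ ^ 2) ^ 2) / (2 * Real.sqrt ((r φ ^ 2)⁻¹ + K))) φ ∧
      0 < (r φ ^ 2)⁻¹ + K := by
    intro φ hφ
    have hrφ := hrpos φ hφ
    have hmφ := hmet φ hφ
    have hfpos : 0 < (r φ ^ 2)⁻¹ + K := by
      have h2 : (0:ℝ) < r φ ^ 2 := pow_pos hrφ 2
      have : (r φ ^ 2)⁻¹ + K = (1 + K * r φ ^ 2) / r φ ^ 2 := by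
        field_simp
      rw [this]; exact div_pos hmφ h2
    have hrd : HasDerivAt r (deriv r φ) φ :=
      ((hr φ hφ).differentiableAt (hIopen.mem_nhds hφ)).hasDerivAt
    have hf : HasDerivAt (fun x => (r x ^ 2)⁻¹ + K)
        (-(2 * r φ ^ 1 * deriv r φ) / (r φ ^ 2) ^ 2) φ := by
      have h1 : HasDerivAt (fun x => r x ^ 2) ((2:ℕ) * r φ ^ 1 * deriv r φ) φ := hrd.pow 2
      have h2 := h1.inv (pow_ne_zero 2 hrφ.ne')
      simpa using h2.add_const K
    exact ⟨hf.sqrt hfpos.ne', hfpos⟩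
  constructor
  · intro φ hφ
    exact ((key φ hφ).1.differentiableAt).differentiableWithinAt
  · intro φ hφ
    obtain ⟨hu, hfpos⟩ := key φ hφ
    have hd := hu.deriv
    rw [hd]
    have hrφ := hrpos φ hφ
    have hmφ := hmet φ hφ
    set u := Real.sqrt ((r φ ^ 2)⁻¹ + K) with hu_def
    have hupos : 0 < u := Real.sqrt_pos.mpr hfpos
    have hu2 : u ^ 2 = (r φ ^ 2)⁻¹ + K := Real.sq_sqrt hfpos.le
    have horb := horbit φ hφ
    have hn' : (n:ℝ) ≠ 0 := Nat.cast_ne_zero.mpr hn.ne'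
    have hr' : r φ ≠ 0 := hrφ.ne'
    have hm' : (1 + K * r φ ^ 2) ≠ 0 := hmφ.ne'
    -- r^6 * u^2 = r^4 * (1 + K r^2)
    have hr6 : r φ ^ 6 * u ^ 2 = r φ ^ 4 * (1 + K * r φ ^ 2) := by
      rw [hu2]; field_simp
    rw [← hu_def] at horb
    field_simp at horb ⊢
    have hr2 : r φ ^ 2 * u ^ 2 = 1 + K * r φ ^ 2 := by
      rw [hu2]; field_simp
    have hD : 1 + r φ ^ 2 * K ≠ 0 := by rw [mul_comm]; exact hm'
    rw [div_eq_iff hD] at horb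
    linear_combination horb + ((n:ℝ)^2 * r φ ^ 4 * u^2 * J^2
      - (n:ℝ)^2 * r φ ^ 2 * (r φ ^ 2 * 2 * (E - (u + G)) - J ^ 2)) * hr2
end

section
/- Let m, n be positive integers, D, K, G, E, J real constants with J ≠ 0, σ ∈ {1, −1}, I ⊆ ℝ an open interval, and r : I → ℝ a differentiable function such that for all φ ∈ I: r(φ) > 0, (1 − D·r(φ)²)² − K·r(φ)⁴ > 0, and 1 − D·r(φ)² + σ·S(φ) > 0 where S(φ) := √((1 − D·r(φ)²)² − K·r(φ)⁴). Suppose r satisfies the orbit equation ((1 − D·r(φ)² + σ·S(φ))/(r(φ)⁴·S(φ)²))·(mJ/n)²·r'(φ)² = E − (G − σ·r(φ)²/(1 − D·r(φ)² + σ·S(φ))) − J²/(2r(φ)²) for every φ ∈ I. Then the function v(φ) := r(φ)⁻²·(1 − D·r(φ)² + σ·S(φ)) is differentiable on I and satisfies ((mJ/n)·v'(φ))² = 4(E − G)·v(φ) − J²·(v(φ)² + 2D·v(φ) + K) + 4σ for every φ ∈ I. -/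
open Real

/-- The change of variables `v = r⁻²(1 - Dr² + σ√((1-Dr²)² - Kr⁴))` transforms the
type II orbit equation into a harmonic-type equation (proof of Proposition 3.1, type II). -/
theorem typeII_change_of_variables
    (m n : ℕ) (hm : 0 < m) (hn : 0 < n)
    (D K G E J σ : ℝ) (hJ : J ≠ 0) (hσ : σ = 1 ∨ σ = -1)
    (I : Set ℝ) (hIopen : IsOpen I) (hIconn : I.OrdConnected)
    (r : ℝ → ℝ) (hr : DifferentiableOn ℝ r I)
    (hrpos : ∀ φ ∈ I, 0 < r φ)
    (hmet : ∀ φ ∈ I, 0 < (1 - D * r φ ^ 2) ^ 2 - K * r φ ^ 4)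
    (hmet' : ∀ φ ∈ I,
      0 < 1 - D * r φ ^ 2 + σ * Real.sqrt ((1 - D * r φ ^ 2) ^ 2 - K * r φ ^ 4))
    (horbit : ∀ φ ∈ I,
      (1 - D * r φ ^ 2 + σ * Real.sqrt ((1 - D * r φ ^ 2) ^ 2 - K * r φ ^ 4))
            / (r φ ^ 4 * (Real.sqrt ((1 - D * r φ ^ 2) ^ 2 - K * r φ ^ 4)) ^ 2)
          * ((m : ℝ) * J / (n : ℝ)) ^ 2 * (deriv r φ) ^ 2
        = E
          - (G - σ * r φ ^ 2
              / (1 - D * r φ ^ 2 + σ * Real.sqrt ((1 - D * r φ ^ 2) ^ 2 - K * r φ ^ 4)))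
          - J ^ 2 / (2 * r φ ^ 2)) :
    DifferentiableOn ℝ
        (fun x => (r x ^ 2)⁻¹
          * (1 - D * r x ^ 2 + σ * Real.sqrt ((1 - D * r x ^ 2) ^ 2 - K * r x ^ 4))) I ∧
    ∀ φ ∈ I,
      ((m : ℝ) * J / (n : ℝ)
            * deriv (fun x => (r x ^ 2)⁻¹
                * (1 - D * r x ^ 2
                    + σ * Real.sqrt ((1 - D * r x ^ 2) ^ 2 - K * r x ^ 4))) φ) ^ 2
        = 4 * (E - G)
              * ((r φ ^ 2)⁻¹
                * (1 - D * r φ ^ 2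
                    + σ * Real.sqrt ((1 - D * r φ ^ 2) ^ 2 - K * r φ ^ 4)))
          - J ^ 2
              * (((r φ ^ 2)⁻¹
                    * (1 - D * r φ ^ 2
                        + σ * Real.sqrt ((1 - D * r φ ^ 2) ^ 2 - K * r φ ^ 4))) ^ 2
                + 2 * D * ((r φ ^ 2)⁻¹
                    * (1 - D * r φ ^ 2
                        + σ * Real.sqrt ((1 - D * r φ ^ 2) ^ 2 - K * r φ ^ 4)))
                + K)
          + 4 * σ := by
  have hσ2 : σ ^ 2 = 1 := by rcases hσ with h | h <;> rw [h] <;> norm_num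
  -- the key derivative computation
  have key : ∀ φ ∈ I, HasDerivAt
      (fun x => (r x ^ 2)⁻¹
        * (1 - D * r x ^ 2 + σ * Real.sqrt ((1 - D * r x ^ 2) ^ 2 - K * r x ^ 4)))
      (-(2 * σ * deriv r φ
          * (1 - D * r φ ^ 2 + σ * Real.sqrt ((1 - D * r φ ^ 2) ^ 2 - K * r φ ^ 4)))
        / (r φ ^ 3 * Real.sqrt ((1 - D * r φ ^ 2) ^ 2 - K * r φ ^ 4))) φ := by
    intro φ hφ
    have hRpos := hrpos φ hφ
    have hRne : r φ ≠ 0 := hRpos.ne'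
    have hApos := hmet φ hφ
    have hSpos : 0 < Real.sqrt ((1 - D * r φ ^ 2) ^ 2 - K * r φ ^ 4) :=
      Real.sqrt_pos.mpr hApos
    have hS2 : (Real.sqrt ((1 - D * r φ ^ 2) ^ 2 - K * r φ ^ 4)) ^ 2
        = (1 - D * r φ ^ 2) ^ 2 - K * r φ ^ 4 := Real.sq_sqrt hApos.le
    have hR : HasDerivAt r (deriv r φ) φ :=
      (hr.differentiableAt (hIopen.mem_nhds hφ)).hasDerivAt
    have h2 : HasDerivAt (fun x => r x ^ 2) (2 * r φ ^ 1 * deriv r φ) φ := hR.pow 2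
    have h4 : HasDerivAt (fun x => r x ^ 4) (4 * r φ ^ 3 * deriv r φ) φ := by
      have := hR.pow 4; norm_num at this ⊢; exact this
    have hw : HasDerivAt (fun x => 1 - D * r x ^ 2)
        (-(D * (2 * r φ ^ 1 * deriv r φ))) φ := (h2.const_mul D).const_sub 1
    have hA : HasDerivAt (fun x => (1 - D * r x ^ 2) ^ 2 - K * r x ^ 4)
        (2 * (1 - D * r φ ^ 2) ^ 1 * (-(D * (2 * r φ ^ 1 * deriv r φ)))
          - K * (4 * r φ ^ 3 * deriv r φ)) φ := by
      exact (hw.pow 2).sub (h4.const_mul K)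
    have hsq := hA.sqrt hApos.ne'
    have hinner := hw.add (hsq.const_mul σ)
    have hgi := h2.inv (pow_ne_zero 2 hRne)
    have hv := hgi.mul hinner
    set S := Real.sqrt ((1 - D * r φ ^ 2) ^ 2 - K * r φ ^ 4) with hSdef
    set R := r φ with hRdef
    set p := deriv r φ with hpdef
    refine hv.congr_deriv ?_
    show -(2 * R ^ 1 * p) / (R ^ 2) ^ 2 * (1 - D * R ^ 2 + σ * S)
      + (R ^ 2)⁻¹ * (-(D * (2 * R ^ 1 * p))
        + σ * ((2 * (1 - D * R ^ 2) ^ 1 * -(D * (2 * R ^ 1 * p)) - K * (4 * R ^ 3 * p)) / (2 * S))) = _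
    field_simp
    linear_combination (-4 * p * σ) * hS2 + (4 * p * S) * hσ2
  constructor
  · intro φ hφ
    exact ((key φ hφ).differentiableAt).differentiableWithinAt
  · intro φ hφ
    have hd := (key φ hφ).deriv
    rw [hd]
    have hRpos := hrpos φ hφ
    have hRne : r φ ≠ 0 := hRpos.ne'
    have hApos := hmet φ hφ
    have hSpos : 0 < Real.sqrt ((1 - D * r φ ^ 2) ^ 2 - K * r φ ^ 4) :=
      Real.sqrt_pos.mpr hApos
    have hS2 : (Real.sqrt ((1 - D * r φ ^ 2) ^ 2 - K * r φ ^ 4)) ^ 2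
        = (1 - D * r φ ^ 2) ^ 2 - K * r φ ^ 4 := Real.sq_sqrt hApos.le
    have hPpos := hmet' φ hφ
    have horb := horbit φ hφ
    set S := Real.sqrt ((1 - D * r φ ^ 2) ^ 2 - K * r φ ^ 4) with hSdef
    set R := r φ with hRdef
    set p := deriv r φ with hpdef
    set t := (m : ℝ) * J / (n : ℝ) with htdef
    field_simp at horb ⊢
    linear_combination (2 * σ ^ 2) * horb
      + (R ^ 2 * S ^ 2 * (4 * R ^ 2 * (1 - D * R ^ 2 + σ * S) * (E - G)
          - 2 * (1 - D * R ^ 2 + σ * S) * J ^ 2 + 4 * R ^ 4 * σ + J ^ 2 * S ^ 2)) * hσ2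
      + (R ^ 2 * S ^ 2 * J ^ 2) * hS2
end

section
/- Let m, n be positive integers, D, K, G, E, J real constants with J ≠ 0, σ ∈ {1, −1}, I ⊆ ℝ a nonempty open interval, and v : I → ℝ a twice continuously differentiable function satisfying ((mJ/n)·v'(φ))² = 4(E − G)·v(φ) − J²·(v(φ)² + 2D·v(φ) + K) + 4σ for every φ ∈ I, and such that the set {φ ∈ I : v'(φ) = 0} has empty interior in I. Then there exists a real constant φ₀ such that J²·(v(φ) + D) + 2G − 2E = √((2E − 2G − D·J²)² + 4σ·J² − K·J⁴) · cos(n·φ/m − φ₀) for all φ ∈ I. -/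
open Real

/-- Simple harmonic motion from a first-order energy identity. -/
lemma shm_aux (k : ℝ) (hk : 0 < k) (I : Set ℝ) (hIopen : IsOpen I)
    (hconv : Convex ℝ I) (hIne : I.Nonempty) (w : ℝ → ℝ)
    (hw1 : ∀ φ ∈ I, HasDerivAt w (deriv w φ) φ)
    (hw2 : ∀ φ ∈ I, HasDerivAt (deriv w) (deriv (deriv w) φ) φ)
    (hw2c : ContinuousOn (deriv (deriv w)) I)
    (A2 : ℝ) (hA2 : ∀ φ ∈ I, (deriv w φ) ^ 2 / k ^ 2 + (w φ) ^ 2 = A2)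
    (hdense : ∀ φ ∈ I, ∀ U : Set ℝ, IsOpen U → φ ∈ U →
      ∃ ψ, ψ ∈ U ∩ I ∧ deriv w ψ ≠ 0) :
    ∃ φ₀ : ℝ, ∀ φ ∈ I, w φ = Real.sqrt A2 * Real.cos (k * φ - φ₀) := by
  have hk0 : k ≠ 0 := hk.ne'
  -- Step A: w' * (w'' + k^2 w) = 0 on I
  have stepA : ∀ φ ∈ I, deriv w φ * (deriv (deriv w) φ + k ^ 2 * w φ) = 0 := by
    intro φ hφ
    have hh : HasDerivAt (fun ψ => (deriv w ψ) ^ 2 / k ^ 2 + (w ψ) ^ 2)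
        ((2 * deriv w φ ^ 1 * deriv (deriv w) φ) / k ^ 2 + 2 * w φ ^ 1 * deriv w φ) φ :=
      (((hw2 φ hφ).pow 2).div_const (k ^ 2)).add ((hw1 φ hφ).pow 2)
    have heq : (2 * deriv w φ ^ 1 * deriv (deriv w) φ) / k ^ 2 + 2 * w φ ^ 1 * deriv w φ = 0 := by
      have hloc : (fun ψ => (deriv w ψ) ^ 2 / k ^ 2 + (w ψ) ^ 2) =ᶠ[nhds φ] fun _ => A2 := by
        filter_upwards [hIopen.mem_nhds hφ] with ψ hψ using hA2 ψ hψ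
      have := hh.deriv
      rw [hloc.deriv_eq, deriv_const] at this
      linarith [this]
    field_simp at heq
    linear_combination heq / 2
  -- Step B: w'' = -k^2 w on I
  have hwc : ContinuousOn w I := fun φ hφ => (hw1 φ hφ).continuousAt.continuousWithinAt
  have hw'c : ContinuousOn (deriv w) I := fun φ hφ => (hw2 φ hφ).continuousAt.continuousWithinAt
  have stepB : ∀ φ ∈ I, deriv (deriv w) φ + k ^ 2 * w φ = 0 := by
    intro φ hφ
    by_contra hG
    have hcont : ContinuousAt (fun ψ => deriv (deriv w) ψ + k ^ 2 * w ψ) φ :=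
      ((hw2c.add (continuousOn_const.mul hwc)).continuousAt (hIopen.mem_nhds hφ))
    have hev : ∀ᶠ ψ in nhds φ, (deriv (deriv w) ψ + k ^ 2 * w ψ) ≠ 0 :=
      hcont.eventually_ne hG
    obtain ⟨t, htn, htsub⟩ := hev.exists_mem
    have hφt : φ ∈ interior t := mem_interior_iff_mem_nhds.2 htn
    obtain ⟨ψ, ⟨hψt, hψI⟩, hψ'⟩ := hdense φ hφ (interior t) isOpen_interior hφt
    have h0 := stepA ψ hψI
    have hne := htsub ψ (interior_subset hψt)
    rcases mul_eq_zero.1 h0 with h | h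
    · exact hψ' h
    · exact hne h
  -- Step C: the complex function g = z * exp(I k φ) has zero derivative, where
  -- z = k w + w' I  satisfies  z' = -(I k) z.
  set z : ℝ → ℂ := fun φ => ((k * w φ : ℝ) : ℂ) + ((deriv w φ : ℝ) : ℂ) * Complex.I with hz_def
  set g : ℝ → ℂ := fun φ => z φ * Complex.exp (((k * φ : ℝ) : ℂ) * Complex.I) with hg_def
  have hgderiv : ∀ φ ∈ I, HasDerivAt g 0 φ := by
    intro φ hφ
    have h1 : HasDerivAt (fun ψ : ℝ => k * ψ) k φ := by
      simpa using (hasDerivAt_id φ).const_mul k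
    have h4 : HasDerivAt (fun ψ : ℝ => Complex.exp (((k * ψ : ℝ) : ℂ) * Complex.I))
        (Complex.exp (((k * φ : ℝ) : ℂ) * Complex.I) * ((k : ℂ) * Complex.I)) φ :=
      (h1.ofReal_comp.mul_const Complex.I).cexp
    have hz : HasDerivAt z
        (Complex.ofReal (k * deriv w φ) + Complex.ofReal (deriv (deriv w) φ) * Complex.I) φ := by
      exact (((hw1 φ hφ).const_mul k).ofReal_comp).add
        (((hw2 φ hφ)).ofReal_comp.mul_const Complex.I)
    have hprod := hz.mul h4
    have hB : deriv (deriv w) φ = -(k ^ 2) * w φ := by linarith [stepB φ hφ]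
    have : (Complex.ofReal (k * deriv w φ) + Complex.ofReal (deriv (deriv w) φ) * Complex.I)
          * Complex.exp (((k * φ : ℝ) : ℂ) * Complex.I)
        + z φ * (Complex.exp (((k * φ : ℝ) : ℂ) * Complex.I) * ((k : ℂ) * Complex.I)) = 0 := by
      rw [hB, hz_def]
      push_cast
      linear_combination ((k : ℂ) * Complex.ofReal (deriv w φ)
        * Complex.exp ((k : ℂ) * (φ : ℂ) * Complex.I)) * Complex.I_sq
    rw [this] at hprod
    exact hprod
  -- Step D: g is constant
  obtain ⟨φr, hφr⟩ := hIne
  obtain ⟨c, hgconst⟩ : ∃ c : ℂ, ∀ φ ∈ I, g φ = c := by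
    refine ⟨g φr, fun φ hφ => ?_⟩
    have hdiff : DifferentiableOn ℝ g I := fun ψ hψ =>
      ((hgderiv ψ hψ).differentiableAt).differentiableWithinAt
    have hfd : ∀ ψ ∈ I, fderivWithin ℝ g I ψ = 0 := by
      intro ψ hψ
      rw [fderivWithin_of_isOpen hIopen hψ]
      have hF := (hgderiv ψ hψ).hasFDerivAt
      rw [hF.fderiv]
      ext x
      simp
    exact hconv.is_const_of_fderivWithin_eq_zero hdiff hfd hφ hφr
  -- Step E: conclusion
  refine ⟨Complex.arg c, fun φ hφ => ?_⟩
  have hzφ : ∀ ψ ∈ I, z ψ = c * Complex.exp (-(((k * ψ : ℝ) : ℂ) * Complex.I)) := by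
    intro ψ hψ
    have := hgconst ψ hψ
    rw [hg_def] at this; simp only at this
    rw [← this, Complex.exp_neg, mul_assoc, mul_inv_cancel₀ (Complex.exp_ne_zero _), mul_one]
  have habs : ‖c‖ = k * Real.sqrt A2 := by
    have h2 : ‖z φ‖ = ‖c‖ := by
      rw [hzφ φ hφ, norm_mul, Complex.norm_exp]
      simp [Complex.mul_I_re]
    have h1 : ‖c‖ ^ 2 = k ^ 2 * A2 := by
      rw [← h2, hz_def]
      simp only [Complex.sq_norm, Complex.normSq_apply, Complex.add_re, Complex.add_im,
        Complex.mul_I_re, Complex.mul_I_im, Complex.ofReal_re, Complex.ofReal_im]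
      have := hA2 φ hφ
      have hk2 : k ^ 2 ≠ 0 := pow_ne_zero 2 hk0
      field_simp at this
      nlinarith [this]
    have : ‖c‖ = Real.sqrt (k ^ 2 * A2) := by
      rw [← h1, Real.sqrt_sq (norm_nonneg c)]
    rw [this, Real.sqrt_mul (sq_nonneg k), Real.sqrt_sq hk.le]
  have hre : k * w φ = (z φ).re := by
    rw [hz_def]; simp [Complex.mul_I_re]
  have hexp : Complex.exp (-(((k * φ : ℝ) : ℂ) * Complex.I))
      = ((Real.cos (k * φ) : ℝ) : ℂ) - ((Real.sin (k * φ) : ℝ) : ℂ) * Complex.I := by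
    rw [show -(((k * φ : ℝ) : ℂ) * Complex.I) = ((-(k * φ) : ℝ) : ℂ) * Complex.I by
        push_cast; ring,
      Complex.exp_mul_I, ← Complex.ofReal_cos, ← Complex.ofReal_sin]
    rw [Real.cos_neg, Real.sin_neg]
    push_cast
    ring
  have hkey : k * w φ = c.re * Real.cos (k * φ) + c.im * Real.sin (k * φ) := by
    rw [hre, hzφ φ hφ, hexp]
    simp only [Complex.mul_re, Complex.sub_re, Complex.sub_im, Complex.ofReal_re,
      Complex.ofReal_im, Complex.mul_im, Complex.I_re, Complex.I_im,
      Complex.add_re, Complex.add_im]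
    ring
  have hcre : c.re = ‖c‖ * Real.cos (Complex.arg c) := by
    by_cases hc0 : c = 0
    · simp [hc0]
    · rw [Complex.cos_arg hc0]
      field_simp [norm_ne_zero_iff.mpr hc0]
  have hcim : c.im = ‖c‖ * Real.sin (Complex.arg c) := by
    by_cases hc0 : c = 0
    · simp [hc0]
    · rw [Complex.sin_arg]
      field_simp [norm_ne_zero_iff.mpr hc0]
  have : k * w φ = k * (Real.sqrt A2 * Real.cos (k * φ - Complex.arg c)) := by
    rw [hkey, hcre, hcim, habs, Real.cos_sub]
    ring
  exact mul_left_cancel₀ hk0 this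


/-- Integration of the transformed type II orbit equation. -/
theorem typeII_integrated_orbit
    (m n : ℕ) (hm : 0 < m) (hn : 0 < n)
    (D K G E J σ : ℝ) (hJ : J ≠ 0) (hσ : σ = 1 ∨ σ = -1)
    (I : Set ℝ) (hIopen : IsOpen I) (hIconn : I.OrdConnected) (hIne : I.Nonempty)
    (v : ℝ → ℝ) (hv : ContDiffOn ℝ 2 v I)
    (hode : ∀ φ ∈ I,
      ((m : ℝ) * J / (n : ℝ) * deriv v φ) ^ 2
        = 4 * (E - G) * v φ - J ^ 2 * ((v φ) ^ 2 + 2 * D * v φ + K) + 4 * σ)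
    (hcrit : interior {φ | φ ∈ I ∧ deriv v φ = 0} = ∅) :
    ∃ φ₀ : ℝ, ∀ φ ∈ I,
      J ^ 2 * (v φ + D) + 2 * G - 2 * E
        = Real.sqrt ((2 * E - 2 * G - D * J ^ 2) ^ 2 + 4 * σ * J ^ 2 - K * J ^ 4)
            * Real.cos ((n : ℝ) * φ / (m : ℝ) - φ₀) := by
  have hm0 : ((m : ℝ)) ≠ 0 := Nat.cast_ne_zero.2 hm.ne'
  have hn0 : ((n : ℝ)) ≠ 0 := Nat.cast_ne_zero.2 hn.ne'
  set k : ℝ := (n : ℝ) / (m : ℝ) with hk_def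
  have hk : 0 < k := div_pos (by exact_mod_cast hn) (by exact_mod_cast hm)
  set w : ℝ → ℝ := fun φ => J ^ 2 * v φ + (J ^ 2 * D + 2 * G - 2 * E) with hw_def
  have hdw : deriv w = fun φ => J ^ 2 * deriv v φ := by
    funext φ
    rw [hw_def]
    rw [show (fun φ => J ^ 2 * v φ + (J ^ 2 * D + 2 * G - 2 * E))
        = fun φ => (fun ψ => J ^ 2 * v ψ) φ + (J ^ 2 * D + 2 * G - 2 * E) from rfl]
    rw [deriv_add_const, deriv_const_mul_field]
  have hddw : deriv (deriv w) = fun φ => J ^ 2 * deriv (deriv v) φ := by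
    rw [hdw]
    funext φ
    rw [deriv_const_mul_field]
  have hconv : Convex ℝ I := convex_iff_ordConnected.mpr hIconn
  have hvd : DifferentiableOn ℝ v I := hv.differentiableOn (by norm_num)
  have hdv1 : ContDiffOn ℝ 1 (deriv v) I := hv.deriv_of_isOpen hIopen (by norm_num)
  have hdvd : DifferentiableOn ℝ (deriv v) I := hdv1.differentiableOn (by norm_num)
  have hddvc : ContinuousOn (deriv (deriv v)) I :=
    hdv1.continuousOn_deriv_of_isOpen hIopen le_rfl
  have hw1 : ∀ φ ∈ I, HasDerivAt w (deriv w φ) φ := by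
    intro φ hφ
    have : DifferentiableAt ℝ w φ :=
      (((hvd.differentiableAt (hIopen.mem_nhds hφ)).const_mul (J ^ 2)).add_const _)
    exact this.hasDerivAt
  have hw2 : ∀ φ ∈ I, HasDerivAt (deriv w) (deriv (deriv w) φ) φ := by
    intro φ hφ
    rw [hdw]
    exact ((hdvd.differentiableAt (hIopen.mem_nhds hφ)).const_mul (J ^ 2)).hasDerivAt
  have hw2c : ContinuousOn (deriv (deriv w)) I := by
    rw [hddw]
    exact continuousOn_const.mul hddvc
  set A2 : ℝ := (2 * E - 2 * G - D * J ^ 2) ^ 2 + 4 * σ * J ^ 2 - K * J ^ 4 with hA2_def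
  have hA2 : ∀ φ ∈ I, (deriv w φ) ^ 2 / k ^ 2 + (w φ) ^ 2 = A2 := by
    intro φ hφ
    have h := hode φ hφ
    rw [hdw, hw_def, hA2_def, hk_def]
    field_simp at h ⊢
    linear_combination (J ^ 2) * h
    
  have hdense : ∀ φ ∈ I, ∀ U : Set ℝ, IsOpen U → φ ∈ U →
      ∃ ψ, ψ ∈ U ∩ I ∧ deriv w ψ ≠ 0 := by
    intro φ hφ U hU hφU
    by_contra hcon
    push_neg at hcon
    have hsub : U ∩ I ⊆ {φ | φ ∈ I ∧ deriv v φ = 0} := by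
      rintro ψ ⟨hψU, hψI⟩
      refine ⟨hψI, ?_⟩
      have h0 := hcon ψ ⟨hψU, hψI⟩
      rw [hdw] at h0
      have : J ^ 2 * deriv v ψ = 0 := by simpa using h0
      rcases mul_eq_zero.1 this with h | h
      · exact absurd h (pow_ne_zero 2 hJ)
      · exact h
    have hop : IsOpen (U ∩ I) := hU.inter hIopen
    have := hop.subset_interior_iff.2 hsub
    rw [hcrit] at this
    exact this ⟨hφU, hφ⟩
  obtain ⟨φ₀, hfin⟩ := shm_aux k hk I hIopen hconv hIne w hw1 hw2 hw2c A2 hA2 hdense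
  refine ⟨φ₀, fun φ hφ => ?_⟩
  have := hfin φ hφ
  rw [hw_def] at this
  simp only at this
  have harg : k * φ = (n : ℝ) * φ / (m : ℝ) := by
    rw [hk_def]; ring
  rw [harg] at this
  rw [hA2_def] at this
  linarith [this]
end

section
/- Let m, n be positive integers, K, G, E, J, φ₀ real constants with J ≠ 0, and suppose C := 1 + 2J²(E − G) + K·J⁴ ≥ 0. Define u : ℝ → ℝ by u(φ) := (√C · cos(n·φ/m − φ₀) − 1)/J². Then u satisfies ((mJ/n)·u'(φ))² = 2(E − G) + K·J² − 2·u(φ) − J²·u(φ)² for all φ ∈ ℝ. -/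
open Real

/-- The closed-form type I orbits solve the transformed type I orbit equation. -/
theorem typeI_orbit_formula_solves_ode
    (m n : ℕ) (hm : 0 < m) (hn : 0 < n)
    (K G E J φ₀ : ℝ) (hJ : J ≠ 0)
    (C : ℝ) (hCdef : C = 1 + 2 * J ^ 2 * (E - G) + K * J ^ 4) (hC : 0 ≤ C)
    (u : ℝ → ℝ)
    (hu : u = fun φ =>
      (Real.sqrt C * Real.cos ((n : ℝ) * φ / (m : ℝ) - φ₀) - 1) / J ^ 2) :
    ∀ φ : ℝ,
      ((m : ℝ) * J / (n : ℝ) * deriv u φ) ^ 2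
        = 2 * (E - G) + K * J ^ 2 - 2 * u φ - J ^ 2 * (u φ) ^ 2 := by
  intro φ
  have hm' : (m : ℝ) ≠ 0 := Nat.cast_ne_zero.mpr hm.ne'
  have hn' : (n : ℝ) ≠ 0 := Nat.cast_ne_zero.mpr hn.ne'
  have hinner : HasDerivAt (fun φ : ℝ => (n : ℝ) * φ / (m : ℝ) - φ₀)
      ((n : ℝ) / (m : ℝ)) φ := by
    have := ((hasDerivAt_id φ).const_mul (n : ℝ)).div_const (m : ℝ)
    simpa using this.sub_const φ₀
  have hd : HasDerivAt u
      ((Real.sqrt C * -Real.sin ((n : ℝ) * φ / (m : ℝ) - φ₀) * ((n : ℝ) / (m : ℝ))) / J ^ 2) φ := by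
    rw [hu]
    have := (((hinner.cos).const_mul (Real.sqrt C)).sub_const 1).div_const (J ^ 2)
    refine this.congr_deriv ?_
    ring
  rw [hd.deriv, hu]
  have hsq : Real.sqrt C ^ 2 = C := Real.sq_sqrt hC
  have hsin : Real.sin ((n : ℝ) * φ / (m : ℝ) - φ₀) ^ 2
      = 1 - Real.cos ((n : ℝ) * φ / (m : ℝ) - φ₀) ^ 2 := by
    rw [← Real.sin_sq_add_cos_sq ((n : ℝ) * φ / (m : ℝ) - φ₀)]; ring
  simp only
  set s := Real.sin ((n : ℝ) * φ / (m : ℝ) - φ₀) with hsdef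
  set c := Real.cos ((n : ℝ) * φ / (m : ℝ) - φ₀) with hcdef
  have hJ2 : (J : ℝ) ^ 2 ≠ 0 := pow_ne_zero 2 hJ
  field_simp
  linear_combination Real.sqrt C ^ 2 * hsin
    + hsq
    + hCdef
end

section
/- Let m, n be positive integers, D, K, G, E, J, φ₀ real constants with J ≠ 0, σ ∈ {1, −1}, and suppose C₂ := (2E − 2G − D·J²)² + 4σ·J² − K·J⁴ ≥ 0. Define v : ℝ → ℝ by v(φ) := (√C₂ · cos(n·φ/m − φ₀) + 2(E − G) − D·J²)/J². Then v satisfies ((mJ/n)·v'(φ))² = 4(E − G)·v(φ) − J²·(v(φ)² + 2D·v(φ) + K) + 4σ for all φ ∈ ℝ. -/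
open Real

/-- The closed-form type II orbits solve the transformed type II orbit equation. -/
theorem typeII_orbit_formula_solves_ode
    (m n : ℕ) (hm : 0 < m) (hn : 0 < n)
    (D K G E J φ₀ σ : ℝ) (hJ : J ≠ 0) (hσ : σ = 1 ∨ σ = -1)
    (C₂ : ℝ)
    (hCdef : C₂ = (2 * E - 2 * G - D * J ^ 2) ^ 2 + 4 * σ * J ^ 2 - K * J ^ 4)
    (hC : 0 ≤ C₂)
    (v : ℝ → ℝ)
    (hv : v = fun φ =>
      (Real.sqrt C₂ * Real.cos ((n : ℝ) * φ / (m : ℝ) - φ₀)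
        + 2 * (E - G) - D * J ^ 2) / J ^ 2) :
    ∀ φ : ℝ,
      ((m : ℝ) * J / (n : ℝ) * deriv v φ) ^ 2
        = 4 * (E - G) * v φ - J ^ 2 * ((v φ) ^ 2 + 2 * D * v φ + K) + 4 * σ := by
  intro φ
  have hm' : (m : ℝ) ≠ 0 := Nat.cast_ne_zero.mpr hm.ne'
  have hn' : (n : ℝ) ≠ 0 := Nat.cast_ne_zero.mpr hn.ne'
  set θ : ℝ := (n : ℝ) * φ / (m : ℝ) - φ₀ with hθ
  have hd : HasDerivAt v (-Real.sqrt C₂ * Real.sin θ * ((n : ℝ) / (m : ℝ)) / J ^ 2) φ := by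
    rw [hv]
    have h1 : HasDerivAt (fun x : ℝ => (n : ℝ) * x / (m : ℝ) - φ₀) ((n : ℝ) / (m : ℝ)) φ := by
      have := ((hasDerivAt_id φ).const_mul (n : ℝ)).div_const (m : ℝ)
      simpa using this.sub_const φ₀
    have h2 := (h1.cos).const_mul (Real.sqrt C₂)
    have h3 := ((h2.add_const (2 * (E - G))).sub_const (D * J ^ 2)).div_const (J ^ 2)
    refine h3.congr_deriv ?_
    rw [hθ]; ring
  rw [hd.deriv]
  have hcos : v φ = (Real.sqrt C₂ * Real.cos θ + 2 * (E - G) - D * J ^ 2) / J ^ 2 := by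
    rw [hv]
  have hsq : Real.sqrt C₂ ^ 2 = C₂ := Real.sq_sqrt hC
  have hsin : Real.sin θ ^ 2 = 1 - Real.cos θ ^ 2 := by
    have := Real.sin_sq_add_cos_sq θ; linarith
  rw [hcos]
  have hJ2 : J ^ 2 ≠ 0 := pow_ne_zero 2 hJ
  field_simp
  have key : C₂ * Real.sin θ ^ 2 = C₂ - C₂ * Real.cos θ ^ 2 := by
    rw [hsin]; ring
  rw [← hsq] at key hCdef
  linear_combination key + hCdef
end

section
/- Let I ⊆ ℝ be an open interval, r, φ : I → ℝ differentiable functions with r(t) > 0 for all t, and define the curve q : I → ℝ³ by q(t) = (r(t)·cos φ(t), r(t)·sin φ(t), 0) and its velocity p(t) := q'(t). Fix t ∈ I with φ'(t) ≠ 0 and set J := r(t)²·φ'(t). Then (cos φ(t)/r(t))·q(t) + (sin φ(t)/(r(t)·J))·(q(t) × (q(t) × p(t))) = (1, 0, 0), where × denotes the cross product in ℝ³. -/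
open Real Matrix

/-- Fradkin's observation: along a planar curve written in polar coordinates in the
equatorial plane of ℝ³, the vector `(cos φ/r)q + (sin φ/(rJ)) q×(q×p)` is the constant
unit vector `(1,0,0)`. -/
theorem fradkin_unit_vector
    (I : Set ℝ) (hIopen : IsOpen I) (hIconn : I.OrdConnected)
    (r φ : ℝ → ℝ)
    (hr : DifferentiableOn ℝ r I) (hφ : DifferentiableOn ℝ φ I)
    (hrpos : ∀ t ∈ I, 0 < r t)
    (q : ℝ → Fin 3 → ℝ)
    (hq : q = fun t => ![r t * Real.cos (φ t), r t * Real.sin (φ t), 0])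
    (p : ℝ → Fin 3 → ℝ) (hp : p = fun t => deriv q t)
    (t : ℝ) (ht : t ∈ I) (hφ' : deriv φ t ≠ 0)
    (J : ℝ) (hJ : J = r t ^ 2 * deriv φ t) :
    (Real.cos (φ t) / r t) • q t
        + (Real.sin (φ t) / (r t * J)) • (q t ⨯₃ (q t ⨯₃ p t))
      = ![1, 0, 0] := by
  have hrd : DifferentiableAt ℝ r t := hr.differentiableAt (hIopen.mem_nhds ht)
  have hφd : DifferentiableAt ℝ φ t := hφ.differentiableAt (hIopen.mem_nhds ht)
  have h1 : HasDerivAt (fun u => r u * Real.cos (φ u))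
      (deriv r t * Real.cos (φ t) - r t * (Real.sin (φ t) * deriv φ t)) t := by
    have := hrd.hasDerivAt.mul
      (((Real.hasDerivAt_cos (φ t)).comp t hφd.hasDerivAt))
    convert this using 1
    · rfl
    · rfl
    · rfl
    · rw [Function.comp_apply]; ring
  have h2 : HasDerivAt (fun u => r u * Real.sin (φ u))
      (deriv r t * Real.sin (φ t) + r t * (Real.cos (φ t) * deriv φ t)) t := by
    have := hrd.hasDerivAt.mul
      (((Real.hasDerivAt_sin (φ t)).comp t hφd.hasDerivAt))
    convert this using 1
    · rfl
    · rfl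
    · rfl
    · rw [Function.comp_apply]
  have hqd : HasDerivAt q
      ![deriv r t * Real.cos (φ t) - r t * (Real.sin (φ t) * deriv φ t),
        deriv r t * Real.sin (φ t) + r t * (Real.cos (φ t) * deriv φ t), 0] t := by
    rw [hasDerivAt_pi]
    intro i
    fin_cases i
    · simpa [hq] using h1
    · simpa [hq] using h2
    · simpa [hq] using (hasDerivAt_const t (0:ℝ))
  have hpt : p t = ![deriv r t * Real.cos (φ t) - r t * (Real.sin (φ t) * deriv φ t),
        deriv r t * Real.sin (φ t) + r t * (Real.cos (φ t) * deriv φ t), 0] := by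
    rw [hp]; exact hqd.deriv
  have hrne : r t ≠ 0 := (hrpos t ht).ne'
  have hs := Real.sin_sq_add_cos_sq (φ t)
  funext i
  fin_cases i <;>
    simp [hq, hpt, hJ, crossProduct, Pi.add_apply, Pi.smul_apply, smul_eq_mul] <;>
    field_simp
  · linear_combination (r t * deriv φ t * (1 + Real.sin (φ t) ^ 2)) * hs
  · linear_combination (-(r t) * Real.cos (φ t) * Real.sin (φ t) * deriv φ t) * hs
end

section
/- Let m, n be positive integers and K a real constant. For every r > 0 with 1 + K·r² > 0, the function x ↦ √(x⁻² + K) has derivative at r equal to −(n/m)·r⁻²·h_I(r), where h_I(r) := (m/n)·(1 + K·r²)^{-1/2}. Consequently V_I(r) = √(r⁻² + K) + G is of the form A₁(∫^r r'⁻²·h_I(r') dr' + B₁) with A₁ = −n/m, i.e. V_I is an intrinsic Kepler potential of the type I Bertrand space. -/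
open Real

lemma sqrt_shift_deriv (K : ℝ) (r : ℝ) (hr : 0 < r) (hK : 0 < 1 + K * r ^ 2) :
    HasDerivAt (fun x : ℝ => Real.sqrt ((x ^ 2)⁻¹ + K))
      (-(r ^ 2)⁻¹ * (Real.sqrt (1 + K * r ^ 2))⁻¹) r := by
  have hr2 : (r : ℝ) ^ 2 ≠ 0 := pow_ne_zero 2 hr.ne'
  have h1 : HasDerivAt (fun x : ℝ => x ^ 2) (2 * r) r := by
    simpa using hasDerivAt_pow 2 r
  have h2 : HasDerivAt (fun x : ℝ => (x ^ 2)⁻¹ + K)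
      (-(2 * r) / (r ^ 2) ^ 2) r := by
    simpa using (h1.inv hr2).add_const K
  have hpos : 0 < (r ^ 2)⁻¹ + K := by
    have heq : (r ^ 2)⁻¹ + K = (1 + K * r ^ 2) / r ^ 2 := by field_simp
    rw [heq]; positivity
  have h3 := (Real.hasDerivAt_sqrt hpos.ne').comp r h2
  have hs : Real.sqrt ((r ^ 2)⁻¹ + K) = Real.sqrt (1 + K * r ^ 2) / r := by
    have heq : (r ^ 2)⁻¹ + K = (1 + K * r ^ 2) / r ^ 2 := by field_simp
    rw [heq, Real.sqrt_div hK.le, Real.sqrt_sq hr.le]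
  have hsq : Real.sqrt (1 + K * r ^ 2) ≠ 0 :=
    (Real.sqrt_pos.mpr hK).ne'
  refine h3.congr_deriv ?_
  symm
  rw [hs]
  field_simp

/-- The type I Bertrand potential `V_I(r) = √(r⁻² + K) + G` is the intrinsic Kepler
potential of the type I Bertrand space: `x ↦ √(x⁻² + K)` has derivative
`-(n/m) r⁻² h_I(r)` with `h_I(r) = (m/n)(1 + Kr²)^{-1/2}`, and consequently `V_I` is of
the form `A₁(∫ r⁻² h_I + B₁)` with `A₁ = -n/m`. -/
theorem typeI_potential_is_intrinsic_Kepler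
    (m n : ℕ) (hm : 0 < m) (hn : 0 < n) (K G : ℝ) :
    (∀ r : ℝ, 0 < r → 0 < 1 + K * r ^ 2 →
      HasDerivAt (fun x : ℝ => Real.sqrt ((x ^ 2)⁻¹ + K))
        (-((n : ℝ) / (m : ℝ)) * (r ^ 2)⁻¹
          * ((m : ℝ) / (n : ℝ) * (Real.sqrt (1 + K * r ^ 2))⁻¹)) r) ∧
    ∀ F : ℝ → ℝ,
      (∀ x : ℝ, 0 < x → 0 < 1 + K * x ^ 2 →
        HasDerivAt F
          ((x ^ 2)⁻¹ * ((m : ℝ) / (n : ℝ) * (Real.sqrt (1 + K * x ^ 2))⁻¹)) x) →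
      ∃ B₁ : ℝ, ∀ x : ℝ, 0 < x → 0 < 1 + K * x ^ 2 →
        Real.sqrt ((x ^ 2)⁻¹ + K) + G = -((n : ℝ) / (m : ℝ)) * (F x + B₁) := by
  have hm0 : (m : ℝ) ≠ 0 := Nat.cast_ne_zero.mpr hm.ne'
  have hn0 : (n : ℝ) ≠ 0 := Nat.cast_ne_zero.mpr hn.ne'
  have hderiv : ∀ r : ℝ, 0 < r → 0 < 1 + K * r ^ 2 →
      HasDerivAt (fun x : ℝ => Real.sqrt ((x ^ 2)⁻¹ + K))
        (-((n : ℝ) / (m : ℝ)) * (r ^ 2)⁻¹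
          * ((m : ℝ) / (n : ℝ) * (Real.sqrt (1 + K * r ^ 2))⁻¹)) r := by
    intro r hr hK
    have := sqrt_shift_deriv K r hr hK
    convert this using 1
    field_simp
  refine ⟨hderiv, ?_⟩
  intro F hF
  -- the domain
  set S : Set ℝ := {x | 0 < x ∧ 0 < 1 + K * x ^ 2} with hS
  have hSopen : IsOpen S := by
    have : S = {x : ℝ | 0 < x} ∩ {x : ℝ | 0 < 1 + K * x ^ 2} := rfl
    rw [this]
    exact (isOpen_lt continuous_const continuous_id).inter
      (isOpen_lt continuous_const (by continuity))
  have hSconv : Convex ℝ S := by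
    intro x hx y hy a b ha hb hab
    simp only [smul_eq_mul]
    constructor
    · rcases eq_or_lt_of_le ha with h0 | hapos
      · have hb1 : b = 1 := by linarith
        simpa [← h0, hb1] using hy.1
      · have := mul_pos hapos hx.1
        nlinarith [mul_nonneg hb hy.1.le]
    · rcases eq_or_lt_of_le ha with h0 | hapos
      · have hb1 : b = 1 := by linarith
        simpa [← h0, hb1] using hy.2
      · rcases le_or_gt K 0 with hKle | hKpos
        · nlinarith [mul_pos hapos hx.2, mul_nonneg hb hy.2.le,
            mul_nonneg (mul_nonneg (neg_nonneg.mpr hKle) (mul_nonneg hapos.le hb))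
              (sq_nonneg (x - y))]
        · nlinarith [sq_nonneg (a • x + b • y), mul_pos hapos hx.1,
            mul_nonneg hb hy.1.le]
  -- g is constant on S
  set g : ℝ → ℝ := fun x =>
    Real.sqrt ((x ^ 2)⁻¹ + K) + G + ((n : ℝ) / (m : ℝ)) * F x with hg
  have hg' : ∀ x ∈ S, HasDerivAt g 0 x := by
    intro x hx
    have h1 := (hderiv x hx.1 hx.2).add_const G
    have h2 := (hF x hx.1 hx.2).const_mul ((n : ℝ) / (m : ℝ))
    have := h1.add h2
    refine this.congr_deriv ?_
    ring
  -- pick a base point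
  set x₀ : ℝ := (1 + |K|)⁻¹ with hx₀
  have hx₀S : x₀ ∈ S := by
    constructor
    · positivity
    · have h1 : (0:ℝ) < 1 + |K| := by positivity
      have h2 : x₀ ^ 2 = ((1 + |K|) ^ 2)⁻¹ := by
        rw [hx₀]; rw [← inv_pow]
      have h3 : K * x₀ ^ 2 ≥ -(|K| * ((1 + |K|) ^ 2)⁻¹) := by
        rw [h2]
        have := neg_abs_le K
        nlinarith [inv_pos.mpr (pow_pos h1 2), abs_nonneg K]
      have h4 : |K| * ((1 + |K|) ^ 2)⁻¹ < 1 := by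
        rw [mul_inv_lt_iff₀ (pow_pos h1 2)]
        nlinarith [abs_nonneg K]
      linarith
  have hconst : ∀ x ∈ S, g x = g x₀ := by
    intro x hx
    have hdiff : DifferentiableOn ℝ g S := fun y hy =>
      ((hg' y hy).differentiableAt).differentiableWithinAt
    apply hSconv.is_const_of_fderivWithin_eq_zero hdiff _ hx hx₀S
    intro y hy
    have h0 : fderiv ℝ g y = 0 := by
      have := (hg' y hy).hasFDerivAt.fderiv
      rw [this]
      ext
      simp
    rw [fderivWithin_of_isOpen hSopen hy, h0]
  refine ⟨-((m : ℝ) / (n : ℝ)) * g x₀, ?_⟩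
  intro x hx hKx
  have hc := hconst x ⟨hx, hKx⟩
  have : Real.sqrt ((x ^ 2)⁻¹ + K) + G = g x₀ - ((n : ℝ) / (m : ℝ)) * F x := by
    rw [← hc, hg]; ring
  rw [this]
  field_simp
  ring
end

section
/- Let m, n be positive integers, D, K real constants and σ ∈ {1, −1}. For every r > 0 with S(r) := √((1−Dr²)² − Kr⁴) satisfying (1−Dr²)² − Kr⁴ > 0 and 1 − Dr² + σ·S(r) > 0, define v(r) := r⁻²·(1 − Dr² + σ·S(r)). Then the function x ↦ √(v(x)) has derivative at r equal to −σ·(n/(√2·m))·r⁻²·h_II(r), where h_II(r) := (m/n)·√(2(1 − Dr² + σ·S(r)))/S(r). Consequently V_II(r) = G − σ/v(r) is of the form A₂(∫^r r'⁻²·h_II(r') dr' + B₂)^{-2} + G, i.e. V_II is (up to the additive constant G) an intrinsic harmonic oscillator potential of the type II Bertrand space. -/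
open Real

/-- Square root factor `S(r) = √((1-Dr²)² - Kr⁴)` of a type II Bertrand space. -/
noncomputable def typeII_S (D K x : ℝ) : ℝ :=
  Real.sqrt ((1 - D * x ^ 2) ^ 2 - K * x ^ 4)

/-- Transformed radial variable `v(r) = r⁻²(1 - Dr² + σS(r))` of a type II Bertrand space. -/
noncomputable def typeII_v (D K σ x : ℝ) : ℝ :=
  (x ^ 2)⁻¹ * (1 - D * x ^ 2 + σ * typeII_S D K x)

/-- Radial metric coefficient `h_II(r) = (m/n)√(2(1-Dr²+σS(r)))/S(r)` of a type II
Bertrand space. -/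
noncomputable def typeII_h (m n : ℕ) (D K σ x : ℝ) : ℝ :=
  (m : ℝ) / (n : ℝ) * Real.sqrt (2 * (1 - D * x ^ 2 + σ * typeII_S D K x)) / typeII_S D K x

/-- The type II Bertrand potential `V_II(r) = G - σ/v(r)` is (up to the additive
constant `G`) an intrinsic harmonic oscillator potential of the type II Bertrand space:
`x ↦ √(v(x))` has derivative `-σ (n/(√2 m)) r⁻² h_II(r)`, and consequently `V_II` is of
the form `A₂(∫ r⁻² h_II + B₂)⁻² + G`. -/
theorem typeII_potential_is_intrinsic_oscillator
    (m n : ℕ) (hm : 0 < m) (hn : 0 < n) (D K G σ : ℝ) (hσ : σ = 1 ∨ σ = -1) :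
    (∀ r : ℝ, 0 < r → 0 < (1 - D * r ^ 2) ^ 2 - K * r ^ 4 →
      0 < 1 - D * r ^ 2 + σ * typeII_S D K r →
      HasDerivAt (fun x : ℝ => Real.sqrt (typeII_v D K σ x))
        (-σ * ((n : ℝ) / (Real.sqrt 2 * (m : ℝ))) * (r ^ 2)⁻¹ * typeII_h m n D K σ r) r) ∧
    ∀ (F : ℝ → ℝ) (I : Set ℝ), IsOpen I → I.OrdConnected →
      (∀ x ∈ I, 0 < x ∧ 0 < (1 - D * x ^ 2) ^ 2 - K * x ^ 4 ∧
        0 < 1 - D * x ^ 2 + σ * typeII_S D K x) →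
      (∀ x ∈ I, HasDerivAt F ((x ^ 2)⁻¹ * typeII_h m n D K σ x) x) →
      ∃ A₂ B₂ : ℝ, A₂ ≠ 0 ∧ ∀ x ∈ I,
        G - σ / typeII_v D K σ x = A₂ * ((F x + B₂) ^ 2)⁻¹ + G := by
  have hσ2 : σ ^ 2 = 1 := by rcases hσ with h | h <;> simp [h]
  have hσ0 : σ ≠ 0 := by rcases hσ with h | h <;> norm_num [h]
  have hm0 : (m : ℝ) ≠ 0 := Nat.cast_ne_zero.mpr hm.ne'
  have hn0 : (n : ℝ) ≠ 0 := Nat.cast_ne_zero.mpr hn.ne'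
  have h2 : Real.sqrt 2 ≠ 0 := by positivity
  have key : ∀ r : ℝ, 0 < r → 0 < (1 - D * r ^ 2) ^ 2 - K * r ^ 4 →
      0 < 1 - D * r ^ 2 + σ * typeII_S D K r →
      HasDerivAt (fun x : ℝ => Real.sqrt (typeII_v D K σ x))
        (-σ * ((n : ℝ) / (Real.sqrt 2 * (m : ℝ))) * (r ^ 2)⁻¹ * typeII_h m n D K σ r) r := by
    intro r hr hQ hw
    have hspos : 0 < typeII_S D K r := Real.sqrt_pos.mpr hQ
    have hs2 : typeII_S D K r ^ 2 = (1 - D * r ^ 2) ^ 2 - K * r ^ 4 := Real.sq_sqrt hQ.le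
    set s := typeII_S D K r with hsdef
    -- derivative of the inner polynomial 1 - D x²
    have hp : HasDerivAt (fun x : ℝ => 1 - D * x ^ 2) (-(D * (2 * r ^ 1))) r :=
      ((hasDerivAt_pow 2 r).const_mul D).const_sub 1
    have hQd : HasDerivAt (fun x : ℝ => (1 - D * x ^ 2) ^ 2 - K * x ^ 4)
        (2 * (1 - D * r ^ 2) ^ 1 * (-(D * (2 * r ^ 1))) - K * (4 * r ^ 3)) r := by
      have : HasDerivAt (fun x : ℝ => (1 - D * x ^ 2) ^ 2 - K * x ^ 4) _ r :=
        (hp.pow 2).sub ((hasDerivAt_pow 4 r).const_mul K)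
      simpa using this
    have hSd : HasDerivAt (fun x : ℝ => typeII_S D K x)
        ((2 * (1 - D * r ^ 2) ^ 1 * (-(D * (2 * r ^ 1))) - K * (4 * r ^ 3)) / (2 * s)) r :=
      hQd.sqrt hQ.ne'
    have hwd : HasDerivAt (fun x : ℝ => 1 - D * x ^ 2 + σ * typeII_S D K x)
        (-(D * (2 * r ^ 1)) + σ *
          ((2 * (1 - D * r ^ 2) ^ 1 * (-(D * (2 * r ^ 1))) - K * (4 * r ^ 3)) / (2 * s))) r :=
      hp.add (hSd.const_mul σ)
    set w := 1 - D * r ^ 2 + σ * s with hwdef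
    set w' := -(D * (2 * r ^ 1)) + σ *
        ((2 * (1 - D * r ^ 2) ^ 1 * (-(D * (2 * r ^ 1))) - K * (4 * r ^ 3)) / (2 * s)) with hw'def
    have hu2 : Real.sqrt w ^ 2 = w := Real.sq_sqrt hw.le
    have hupos : 0 < Real.sqrt w := Real.sqrt_pos.mpr hw
    set u := Real.sqrt w with hudef
    have hdiv : HasDerivAt (fun x : ℝ =>
        Real.sqrt (1 - D * x ^ 2 + σ * typeII_S D K x) / x)
        ((w' / (2 * u) * r - u * 1) / r ^ 2) r :=
      (hwd.sqrt hw.ne').div (hasDerivAt_id r) hr.ne'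
    have heq : (fun x : ℝ => Real.sqrt (typeII_v D K σ x)) =ᶠ[nhds r]
        (fun x : ℝ => Real.sqrt (1 - D * x ^ 2 + σ * typeII_S D K x) / x) := by
      filter_upwards [eventually_gt_nhds hr] with x hx
      rw [typeII_v, Real.sqrt_mul (by positivity), Real.sqrt_inv, Real.sqrt_sq hx.le]
      ring
    have : HasDerivAt (fun x : ℝ => Real.sqrt (typeII_v D K σ x)) _ r :=
      hdiv.congr_of_eventuallyEq heq
    convert this using 1
    rw [typeII_h, Real.sqrt_mul (by norm_num : (0:ℝ) ≤ 2), ← hsdef, ← hwdef, ← hudef, hw'def]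
    have hS2' : s * s = (1 - D * r ^ 2) ^ 2 - K * r ^ 4 := by nlinarith [hs2]
    have hu2' : u ^ 2 = 1 - D * r ^ 2 + σ * s := by rw [hu2]
    field_simp
    linear_combination (4 * s - 4 * σ) * hu2' + 4 * σ * hS2' - 4 * s * hσ2
  refine ⟨key, ?_⟩
  intro F I hIopen hIconn hcond hF
  rcases Set.eq_empty_or_nonempty I with hIe | ⟨x₀, hx₀⟩
  · exact ⟨1, 0, one_ne_zero, fun x hx => absurd hx (by simp [hIe])⟩
  set c : ℝ := (n : ℝ) / (Real.sqrt 2 * m) with hcdef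
  have hc : 0 < c := by positivity
  set φ : ℝ → ℝ := fun x => Real.sqrt (typeII_v D K σ x) + σ * c * F x with hφdef
  have hφd : ∀ x ∈ I, HasDerivAt φ 0 x := by
    intro x hx
    obtain ⟨hx1, hx2, hx3⟩ := hcond x hx
    have : HasDerivAt (fun x => Real.sqrt (typeII_v D K σ x) + σ * c * F x) _ x :=
      (key x hx1 hx2 hx3).add ((hF x hx).const_mul (σ * c))
    convert this using 1
    rw [hcdef]; ring
  have hconv : Convex ℝ I := convex_iff_ordConnected.mpr hIconn
  have hconst : ∀ x ∈ I, φ x = φ x₀ := by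
    intro x hx
    refine hconv.is_const_of_fderivWithin_eq_zero
      (fun y hy => (hφd y hy).differentiableAt.differentiableWithinAt) ?_ hx hx₀
    intro y hy
    rw [fderivWithin_of_isOpen hIopen hy, (hφd y hy).hasFDerivAt.fderiv]
    apply ContinuousLinearMap.ext; intro t; simp
  set C : ℝ := φ x₀ with hCdef
  refine ⟨-σ * (c ^ 2)⁻¹, -σ * C / c, by simp [hσ0, hc.ne'], ?_⟩
  intro x hx
  obtain ⟨hx1, hx2, hx3⟩ := hcond x hx
  have hv : 0 < typeII_v D K σ x := by
    rw [typeII_v]; positivity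
  have hg : Real.sqrt (typeII_v D K σ x) = C - σ * c * F x := by
    have h := hconst x hx
    simp only [hφdef] at h
    linarith
  have hveq : typeII_v D K σ x = c ^ 2 * (F x + -σ * C / c) ^ 2 := by
    have h1 : typeII_v D K σ x = (C - σ * c * F x) ^ 2 := by
      rw [← hg, Real.sq_sqrt hv.le]
    rw [h1]
    field_simp
    linear_combination (c ^ 2 * F x ^ 2 - C ^ 2) * hσ2
  have hFB : (F x + -σ * C / c) ^ 2 ≠ 0 := by
    intro h
    rw [hveq, h, mul_zero] at hv
    exact lt_irrefl 0 hv
  rw [hveq, div_eq_mul_inv, mul_inv]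
  ring
end

section
/- Let D, K be real constants and σ ∈ {1, −1}. For every r > 0 with S(r) := √((1−Dr²)² − Kr⁴) satisfying (1−Dr²)² − Kr⁴ > 0 and 1 − Dr² + σ·S(r) > 0, the function v(x) := x⁻²·(1 − Dx² + σ·S(x)) is differentiable at r with derivative v'(r) = −2·σ·v(r)/(r·S(r)). -/
open Real

/-- The derivative of the transformed radial variable
`v(x) = x⁻²(1 - Dx² + σ√((1-Dx²)² - Kx⁴))` of a type II Bertrand space is
`v'(r) = -2σ v(r)/(r S(r))`. -/
theorem typeII_v_hasDerivAt
    (D K σ : ℝ) (hσ : σ = 1 ∨ σ = -1)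
    (r : ℝ) (hr : 0 < r)
    (hS : 0 < (1 - D * r ^ 2) ^ 2 - K * r ^ 4)
    (hpos : 0 < 1 - D * r ^ 2 + σ * Real.sqrt ((1 - D * r ^ 2) ^ 2 - K * r ^ 4)) :
    HasDerivAt
      (fun x : ℝ => (x ^ 2)⁻¹
        * (1 - D * x ^ 2 + σ * Real.sqrt ((1 - D * x ^ 2) ^ 2 - K * x ^ 4)))
      (-2 * σ
          * ((r ^ 2)⁻¹
            * (1 - D * r ^ 2 + σ * Real.sqrt ((1 - D * r ^ 2) ^ 2 - K * r ^ 4)))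
          / (r * Real.sqrt ((1 - D * r ^ 2) ^ 2 - K * r ^ 4))) r := by
  have hSpos : 0 < Real.sqrt ((1 - D * r ^ 2) ^ 2 - K * r ^ 4) := Real.sqrt_pos.mpr hS
  have hSsq : Real.sqrt ((1 - D * r ^ 2) ^ 2 - K * r ^ 4) ^ 2
      = (1 - D * r ^ 2) ^ 2 - K * r ^ 4 := Real.sq_sqrt hS.le
  have hσ2 : σ ^ 2 = 1 := by rcases hσ with h | h <;> subst h <;> norm_num
  have hA : HasDerivAt (fun x : ℝ => 1 - D * x ^ 2) (-(D * (2 * r ^ 1))) r := by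
    simpa using (((hasDerivAt_pow 2 r).const_mul D).const_sub 1)
  have hA2 : HasDerivAt (fun x : ℝ => (1 - D * x ^ 2) ^ 2)
      (2 * (1 - D * r ^ 2) ^ 1 * (-(D * (2 * r ^ 1)))) r := hA.pow 2
  have hB : HasDerivAt (fun x : ℝ => K * x ^ 4) (K * (4 * r ^ 3)) r := by
    simpa using ((hasDerivAt_pow 4 r).const_mul K)
  have hQd : HasDerivAt (fun x : ℝ => (1 - D * x ^ 2) ^ 2 - K * x ^ 4)
      (2 * (1 - D * r ^ 2) ^ 1 * (-(D * (2 * r ^ 1))) - K * (4 * r ^ 3)) r := hA2.sub hB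
  have hSd := hQd.sqrt hS.ne'
  have hN := hA.add (hSd.const_mul σ)
  have hInv : HasDerivAt (fun x : ℝ => (x ^ 2)⁻¹) (-(2 * r ^ 1) / (r ^ 2) ^ 2) r :=
    (hasDerivAt_pow 2 r).inv (pow_ne_zero 2 hr.ne')
  have final := hInv.mul hN
  refine final.congr_deriv (Eq.symm ?_)
  simp only [Pi.add_apply]
  set S := Real.sqrt ((1 - D * r ^ 2) ^ 2 - K * r ^ 4) with hSdef
  field_simp
  linear_combination (-4 * S) * hσ2 + (4 * σ) * hSsq
end
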